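/- arXiv:2101.06546 — 6 statements merged into one kernel-verified Lean document; each statement's English description precedes it below -/
import Mathlib

section
/- For every graph G without isolated vertices, the restrained domination number satisfies γ_r(G) ≤ γ_{rI}(G) ≤ 2·γ_r(G), where γ_{rI} is the restrained Italian domination number. -/
open SimpleGraph Finset

variable {V : Type*} [Fintype V]

/-- D is a restrained dominating set of G. -/
def IsRDS (G : SimpleGraph V) (D : Set V) : Prop :=
  ∀ v, v ∉ D → (∃ u ∈ D, G.Adj v u) ∧ ∃ u, u ∉ D ∧ G.Adj v u

/-- The restrained domination number γ_r(G). -/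
noncomputable def rdn (G : SimpleGraph V) : ℕ :=
  sInf {n | ∃ D : Set V, IsRDS G D ∧ D.ncard = n}

open Classical in
/-- f is a restrained Italian dominating function on G. -/
def IsRIDF (G : SimpleGraph V) (f : V → ℕ) : Prop :=
  (∀ v, f v ≤ 2) ∧
  (∀ v, f v = 0 → 2 ≤ ∑ u ∈ Finset.univ.filter (fun u => G.Adj v u), f u) ∧
  (∀ v, f v = 0 → ∃ u, G.Adj v u ∧ f u = 0)

/-- The restrained Italian domination number γ_{rI}(G). -/
noncomputable def ridn (G : SimpleGraph V) : ℕ :=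
  sInf {n | ∃ f : V → ℕ, IsRIDF G f ∧ ∑ v, f v = n}

/-- For every graph `G` without isolated vertices, γ_r(G) ≤ γ_{rI}(G) ≤ 2 γ_r(G). -/
theorem restrained_italian_bounds (G : SimpleGraph V) (h : ∀ v : V, ∃ u, G.Adj v u) :
    rdn G ≤ ridn G ∧ ridn G ≤ 2 * rdn G := by
  classical
  have hrdsne : {n | ∃ D : Set V, IsRDS G D ∧ D.ncard = n}.Nonempty :=
    ⟨(Set.univ : Set V).ncard, Set.univ, fun v hv => absurd (Set.mem_univ v) hv, rfl⟩
  have hridne : {n | ∃ f : V → ℕ, IsRIDF G f ∧ ∑ v, f v = n}.Nonempty := by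
    refine ⟨∑ v : V, 2, fun _ => 2, ⟨fun v => le_refl 2, ?_, ?_⟩, rfl⟩ <;>
      intro v hv <;> simp at hv
  constructor
  · -- rdn ≤ ridn
    obtain ⟨f, hf, hsum⟩ := Nat.sInf_mem hridne
    have hD : IsRDS G {v | f v ≠ 0} := by
      intro v hv
      simp only [Set.mem_setOf_eq, not_not] at hv
      constructor
      · by_contra hcon
        push_neg at hcon
        have hz : ∑ u ∈ Finset.univ.filter (fun u => G.Adj v u), f u = 0 := by
          apply Finset.sum_eq_zero
          intro u hu
          simp only [Finset.mem_filter] at hu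
          by_contra h0
          exact hcon u (by simpa using h0) hu.2
        have h2 := hf.2.1 v hv
        rw [hz] at h2
        exact absurd h2 (by norm_num)
      · obtain ⟨u, hadj, hu0⟩ := hf.2.2 v hv
        exact ⟨u, by simp [hu0], hadj⟩
    have h1 : rdn G ≤ ({v | f v ≠ 0} : Set V).ncard := Nat.sInf_le ⟨_, hD, rfl⟩
    have h2 : ({v | f v ≠ 0} : Set V).ncard ≤ ∑ v, f v := by
      have hc : ({v | f v ≠ 0} : Set V).ncard
          = (Finset.univ.filter (fun v => f v ≠ 0)).card := by
        have he : Finset.univ.filter (fun v => f v ≠ 0)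
            = ({v | f v ≠ 0} : Set V).toFinset := by
          ext v; simp
        rw [Set.ncard_eq_toFinset_card', he]
      rw [hc]
      calc (Finset.univ.filter (fun v => f v ≠ 0)).card
          = ∑ v ∈ Finset.univ.filter (fun v => f v ≠ 0), 1 := by simp
        _ ≤ ∑ v ∈ Finset.univ.filter (fun v => f v ≠ 0), f v :=
            Finset.sum_le_sum (fun v hv => by
              simp only [Finset.mem_filter] at hv
              exact Nat.one_le_iff_ne_zero.mpr hv.2)
        _ ≤ ∑ v, f v := Finset.sum_le_sum_of_subset (Finset.filter_subset _ _)
    rw [hsum] at h2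
    exact h1.trans h2
  · -- ridn ≤ 2 * rdn
    obtain ⟨D, hD, hcard⟩ := Nat.sInf_mem hrdsne
    have hf : IsRIDF G (fun v => if v ∈ D then 2 else 0) := by
      refine ⟨fun v => by dsimp only; split <;> omega, ?_, ?_⟩
      · intro v hv
        have hvD : v ∉ D := by
          by_contra hc; simp [hc] at hv
        obtain ⟨u, huD, hadj⟩ := (hD v hvD).1
        calc (2:ℕ) = if u ∈ D then 2 else 0 := by simp [huD]
          _ ≤ ∑ w ∈ Finset.univ.filter (fun w => G.Adj v w),
                (if w ∈ D then 2 else 0) :=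
            Finset.single_le_sum (f := fun w => if w ∈ D then 2 else 0)
              (fun w _ => Nat.zero_le _)
              (Finset.mem_filter.mpr ⟨Finset.mem_univ u, hadj⟩)
      · intro v hv
        have hvD : v ∉ D := by
          by_contra hc; simp [hc] at hv
        obtain ⟨u, huD, hadj⟩ := (hD v hvD).2
        exact ⟨u, hadj, by simp [huD]⟩
    have hsum : (∑ v : V, if v ∈ D then 2 else 0) = 2 * D.ncard := by
      have hDcard : D.ncard = (Finset.univ.filter (fun v => v ∈ D)).card := by
        have he : Finset.univ.filter (fun v => v ∈ D) = D.toFinset := by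
          ext v; simp
        rw [Set.ncard_eq_toFinset_card', he]
      rw [show (∑ v : V, if v ∈ D then 2 else 0) =
          ∑ v ∈ Finset.univ.filter (fun v => v ∈ D), 2 from (Finset.sum_filter _ _).symm]
      rw [Finset.sum_const, smul_eq_mul, hDcard, mul_comm]
    have hle : ridn G ≤ ∑ v : V, if v ∈ D then 2 else 0 := Nat.sInf_le ⟨_, hf, rfl⟩
    rw [hsum, hcard] at hle
    exact hle
end

section
/- For the double star DS_{r,s} with r, s ≥ 2, the restrained domination number equals r + s (the set of all leaves is the unique minimum restrained dominating set), and γ_{rI}(DS_{r,s}) = γ_r(DS_{r,s}) = r + s. -/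
open SimpleGraph Finset

variable {V : Type*} [Fintype V]

/-- The double star DS_{r,s}: centers `Sum.inl none` and `Sum.inr none` are adjacent,
the first having r leaves and the second s leaves. -/
def doubleStar (r s : ℕ) : SimpleGraph (Option (Fin r) ⊕ Option (Fin s)) :=
  SimpleGraph.fromRel (fun a b =>
    (a = Sum.inl none ∧ b = Sum.inr none) ∨
    (∃ i, a = Sum.inl none ∧ b = Sum.inl (some i)) ∨
    (∃ j, a = Sum.inr none ∧ b = Sum.inr (some j)))

variable {r s : ℕ}

lemma adjL (i : Fin r) (u) : (doubleStar r s).Adj (Sum.inl (some i)) u ↔ u = Sum.inl none := by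
  simp only [doubleStar, fromRel_adj]
  constructor
  · rintro ⟨hne, (⟨h1,h2⟩|⟨k,h1,h2⟩|⟨k,h1,h2⟩)|(⟨h1,h2⟩|⟨k,h1,h2⟩|⟨k,h1,h2⟩)⟩ <;> simp_all
  · rintro rfl; simp

lemma adjR (j : Fin s) (u) : (doubleStar r s).Adj (Sum.inr (some j)) u ↔ u = Sum.inr none := by
  simp only [doubleStar, fromRel_adj]
  constructor
  · rintro ⟨hne, (⟨h1,h2⟩|⟨k,h1,h2⟩|⟨k,h1,h2⟩)|(⟨h1,h2⟩|⟨k,h1,h2⟩|⟨k,h1,h2⟩)⟩ <;> simp_all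
  · rintro rfl; simp

lemma adjC : (doubleStar r s).Adj (Sum.inl none) (Sum.inr none) := by
  simp only [doubleStar, fromRel_adj]
  simp

lemma adjCL (i : Fin r) : (doubleStar r s).Adj (Sum.inl none) (Sum.inl (some i)) := by
  simp only [doubleStar, fromRel_adj]
  simp

lemma adjCR (j : Fin s) : (doubleStar r s).Adj (Sum.inr none) (Sum.inr (some j)) := by
  simp only [doubleStar, fromRel_adj]
  simp


section main
variable (r s : ℕ)

lemma cardV : Fintype.card (Option (Fin r) ⊕ Option (Fin s)) = r + s + 2 := by
  simp; omega

lemma Lcard : ({x | x ≠ Sum.inl none ∧ x ≠ Sum.inr none} :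
    Set (Option (Fin r) ⊕ Option (Fin s))).ncard = r + s := by
  have he : ({x | x ≠ Sum.inl none ∧ x ≠ Sum.inr none} :
      Set (Option (Fin r) ⊕ Option (Fin s))) = ({Sum.inl none, Sum.inr none} : Set _)ᶜ := by
    ext x; simp [not_or]
  have h2 : ({Sum.inl none, Sum.inr none} :
      Set (Option (Fin r) ⊕ Option (Fin s))).ncard = 2 := Set.ncard_pair (by simp)
  have h := Set.ncard_add_ncard_compl ({Sum.inl none, Sum.inr none} :
      Set (Option (Fin r) ⊕ Option (Fin s)))
  rw [he]
  rw [h2, Nat.card_eq_fintype_card, cardV] at h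
  omega

variable {r s}

lemma L_rds (hr : 2 ≤ r) (hs : 2 ≤ s) :
    IsRDS (doubleStar r s) {x | x ≠ Sum.inl none ∧ x ≠ Sum.inr none} := by
  intro v hv
  simp only [Set.mem_setOf_eq, not_and_or, not_not] at hv
  rcases hv with rfl | rfl
  · exact ⟨⟨Sum.inl (some ⟨0, by omega⟩), by simp, adjCL _⟩,
      ⟨Sum.inr none, by simp, adjC⟩⟩
  · exact ⟨⟨Sum.inr (some ⟨0, by omega⟩), by simp, adjCR _⟩,
      ⟨Sum.inl none, by simp, (adjC).symm⟩⟩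

lemma rds_subset {D : Set (Option (Fin r) ⊕ Option (Fin s))}
    (hD : IsRDS (doubleStar r s) D) :
    {x | x ≠ Sum.inl none ∧ x ≠ Sum.inr none} ⊆ D := by
  intro x hx
  by_contra hxD
  obtain ⟨⟨u, huD, hadj⟩, ⟨w, hwD, hadjw⟩⟩ := hD x hxD
  obtain ⟨h1, h2⟩ := hx
  rcases x with (_|i)|(_|j)
  · exact h1 rfl
  · rw [adjL] at hadj hadjw; subst hadj; subst hadjw; exact hwD huD
  · exact h2 rfl
  · rw [adjR] at hadj hadjw; subst hadj; subst hadjw; exact hwD huD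

end main

section ridf
variable {r s : ℕ}

open Classical

lemma filterL (i : Fin r) :
    Finset.univ.filter (fun u => (doubleStar r s).Adj (Sum.inl (some i)) u)
      = {Sum.inl none} := by
  ext u; simp [adjL]

lemma filterR (j : Fin s) :
    Finset.univ.filter (fun u => (doubleStar r s).Adj (Sum.inr (some j)) u)
      = {Sum.inr none} := by
  ext u; simp [adjR]

lemma Fcard : (Finset.univ.filter
    (fun x : Option (Fin r) ⊕ Option (Fin s) => x ≠ Sum.inl none ∧ x ≠ Sum.inr none)).card
    = r + s := by
  have he : (Finset.univ.filter
      (fun x : Option (Fin r) ⊕ Option (Fin s) => x ≠ Sum.inl none ∧ x ≠ Sum.inr none))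
      = ({Sum.inl none, Sum.inr none} : Finset _)ᶜ := by
    ext x; simp [not_or]
  rw [he, Finset.card_compl, cardV]
  rw [Finset.card_insert_of_notMem (by simp), Finset.card_singleton]
  omega

lemma ridf_lower {f : Option (Fin r) ⊕ Option (Fin s) → ℕ}
    (hf : IsRIDF (doubleStar r s) f) : r + s ≤ ∑ v, f v := by
  have hleaf : ∀ x ∈ (Finset.univ.filter
      (fun x : Option (Fin r) ⊕ Option (Fin s) => x ≠ Sum.inl none ∧ x ≠ Sum.inr none)),
      1 ≤ f x := by
    intro x hx
    simp only [Finset.mem_filter] at hx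
    by_contra h
    have hfx : f x = 0 := by omega
    obtain ⟨h1, h2⟩ := hx.2
    rcases x with (_|i)|(_|j)
    · exact h1 rfl
    · obtain ⟨u, hadj, hu0⟩ := hf.2.2 _ hfx
      rw [adjL] at hadj; subst hadj
      have h2 := hf.2.1 _ hfx
      rw [filterL, Finset.sum_singleton, hu0] at h2
      omega
    · exact h2 rfl
    · obtain ⟨u, hadj, hu0⟩ := hf.2.2 _ hfx
      rw [adjR] at hadj; subst hadj
      have h2 := hf.2.1 _ hfx
      rw [filterR, Finset.sum_singleton, hu0] at h2
      omega
  calc r + s = ∑ _x ∈ (Finset.univ.filter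
      (fun x : Option (Fin r) ⊕ Option (Fin s) => x ≠ Sum.inl none ∧ x ≠ Sum.inr none)), 1 := by
        rw [Finset.sum_const, smul_eq_mul, mul_one, Fcard]
    _ ≤ ∑ x ∈ (Finset.univ.filter
      (fun x : Option (Fin r) ⊕ Option (Fin s) => x ≠ Sum.inl none ∧ x ≠ Sum.inr none)), f x :=
        Finset.sum_le_sum hleaf
    _ ≤ ∑ v, f v := Finset.sum_le_sum_of_subset (Finset.filter_subset _ _)

noncomputable def f0 (r s : ℕ) : Option (Fin r) ⊕ Option (Fin s) → ℕ :=
  fun x => if x = Sum.inl none then 0 else if x = Sum.inr none then 0 else 1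

lemma f0_sum : ∑ v, f0 r s v = r + s := by
  classical
  rw [← Fcard (r := r) (s := s)]
  rw [Finset.card_filter]
  apply Finset.sum_congr rfl
  intro x _
  rcases x with (_|i)|(_|j) <;> simp [f0]

lemma f0_ridf (hr : 2 ≤ r) (hs : 2 ≤ s) : IsRIDF (doubleStar r s) (f0 r s) := by
  refine ⟨fun v => by unfold f0; split_ifs <;> omega, ?_, ?_⟩
  · intro v hv
    have hv' : v = Sum.inl none ∨ v = Sum.inr none := by
      by_contra h
      push_neg at h
      simp [f0, h.1, h.2] at hv
    rcases hv' with rfl | rfl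
    · have hsub : ({Sum.inl (some ⟨0, by omega⟩), Sum.inl (some ⟨1, by omega⟩)} :
          Finset (Option (Fin r) ⊕ Option (Fin s))) ⊆
          Finset.univ.filter (fun u => (doubleStar r s).Adj (Sum.inl none) u) := by
        intro x hx
        simp only [Finset.mem_insert, Finset.mem_singleton] at hx
        rcases hx with rfl | rfl <;> simp [adjCL]
      calc (2:ℕ) = ∑ u ∈ ({Sum.inl (some ⟨0, by omega⟩), Sum.inl (some ⟨1, by omega⟩)} :
          Finset (Option (Fin r) ⊕ Option (Fin s))), f0 r s u := by
            rw [Finset.sum_pair (by simp [Fin.ext_iff])]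
            simp [f0]
        _ ≤ _ := Finset.sum_le_sum_of_subset hsub
    · have hsub : ({Sum.inr (some ⟨0, by omega⟩), Sum.inr (some ⟨1, by omega⟩)} :
          Finset (Option (Fin r) ⊕ Option (Fin s))) ⊆
          Finset.univ.filter (fun u => (doubleStar r s).Adj (Sum.inr none) u) := by
        intro x hx
        simp only [Finset.mem_insert, Finset.mem_singleton] at hx
        rcases hx with rfl | rfl <;> simp [adjCR]
      calc (2:ℕ) = ∑ u ∈ ({Sum.inr (some ⟨0, by omega⟩), Sum.inr (some ⟨1, by omega⟩)} :
          Finset (Option (Fin r) ⊕ Option (Fin s))), f0 r s u := by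
            rw [Finset.sum_pair (by simp [Fin.ext_iff])]
            simp [f0]
        _ ≤ _ := Finset.sum_le_sum_of_subset hsub
  · intro v hv
    have hv' : v = Sum.inl none ∨ v = Sum.inr none := by
      by_contra h
      push_neg at h
      simp [f0, h.1, h.2] at hv
    rcases hv' with rfl | rfl
    · exact ⟨Sum.inr none, adjC, by simp [f0]⟩
    · exact ⟨Sum.inl none, (adjC).symm, by simp [f0]⟩

end ridf


/-- For the double star DS_{r,s} with r, s ≥ 2: γ_r = r + s, γ_{rI} = r + s, and the
set of all r + s leaves is the unique minimum restrained dominating set. -/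
theorem doubleStar_rdn_ridn (r s : ℕ) (hr : 2 ≤ r) (hs : 2 ≤ s) :
    rdn (doubleStar r s) = r + s ∧
    ridn (doubleStar r s) = r + s ∧
    IsRDS (doubleStar r s) {x | x ≠ Sum.inl none ∧ x ≠ Sum.inr none} ∧
    (∀ D : Set (Option (Fin r) ⊕ Option (Fin s)), IsRDS (doubleStar r s) D →
      D.ncard = r + s → D = {x | x ≠ Sum.inl none ∧ x ≠ Sum.inr none}) := by
  refine ⟨?_, ?_, L_rds hr hs, ?_⟩
  · apply le_antisymm
    · exact Nat.sInf_le ⟨_, L_rds hr hs, Lcard r s⟩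
    · refine le_csInf ⟨r + s, _, L_rds hr hs, Lcard r s⟩ ?_
      rintro n ⟨D, hD, rfl⟩
      calc r + s = _ := (Lcard r s).symm
        _ ≤ D.ncard := Set.ncard_le_ncard (rds_subset hD) (Set.toFinite D)
  · apply le_antisymm
    · exact Nat.sInf_le ⟨f0 r s, f0_ridf hr hs, f0_sum⟩
    · refine le_csInf ⟨r + s, f0 r s, f0_ridf hr hs, f0_sum⟩ ?_
      rintro n ⟨f, hf, rfl⟩
      exact ridf_lower hf
  · intro D hD hcard
    exact (Set.eq_of_subset_of_ncard_le (rds_subset hD)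
      (by rw [hcard, Lcard]) (Set.toFinite D)).symm
end

section
/- Let G be a graph and f = (V_0, V_1, V_2) a restrained Italian dominating function of G of minimum weight. If γ_{rI}(G) = γ_r(G), then V_2 = ∅ and V_1 is a restrained dominating set of G. -/
open SimpleGraph Finset

variable {V : Type*} [Fintype V]

/-- If f is a minimum-weight RIDF of G and γ_{rI}(G) = γ_r(G), then V₂ = ∅ and V₁ is a
restrained dominating set of G. -/
theorem min_ridf_of_eq (G : SimpleGraph V) (f : V → ℕ) (hf : IsRIDF G f)
    (hmin : ∑ v, f v = ridn G) (heq : ridn G = rdn G) :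
    {v | f v = 2} = ∅ ∧ IsRDS G {v | f v = 1} := by
  classical
  obtain ⟨h1, h2, h3⟩ := hf
  set D : Set V := {v | f v ≠ 0} with hD
  have hRDS : IsRDS G D := by
    intro v hv
    have hv0 : f v = 0 := by simpa [hD] using hv
    constructor
    · by_contra h
      push_neg at h
      have hsum : ∑ u ∈ Finset.univ.filter (fun u => G.Adj v u), f u = 0 := by
        apply Finset.sum_eq_zero
        intro u hu
        simp only [Finset.mem_filter, Finset.mem_univ, true_and] at hu
        by_contra hne
        exact (h u (by simpa [hD] using hne)) hu
      have := h2 v hv0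
      omega
    · obtain ⟨u, hu, hu0⟩ := h3 v hv0
      exact ⟨u, by simp [hD, hu0], hu⟩
  set DF : Finset V := Finset.univ.filter (fun v => f v ≠ 0) with hDF
  have hcard : D.ncard = DF.card := by
    rw [hD, Set.ncard_eq_toFinset_card']
    congr 1
    ext v
    simp [hDF]
  have hsumeq : ∑ v ∈ DF, f v = ∑ v, f v := by
    apply Finset.sum_subset (Finset.subset_univ _)
    intro v _ hv
    simpa [hDF] using hv
  have hle1 : ∀ v ∈ DF, 1 ≤ f v := by
    intro v hv
    simp only [hDF, Finset.mem_filter] at hv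
    omega
  have hcardle : DF.card ≤ ∑ v ∈ DF, f v := by
    calc DF.card = ∑ _v ∈ DF, 1 := by simp
    _ ≤ ∑ v ∈ DF, f v := Finset.sum_le_sum hle1
  have hrdnle : rdn G ≤ D.ncard := Nat.sInf_le ⟨D, hRDS, rfl⟩
  have hkey : ∑ _v ∈ DF, 1 = ∑ v ∈ DF, f v := by
    have := Finset.sum_le_sum hle1
    simp only [Finset.sum_const, smul_eq_mul, mul_one] at this ⊢
    omega
  have hone : ∀ v ∈ DF, 1 = f v :=
    (Finset.sum_eq_sum_iff_of_le hle1).mp hkey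
  have hfle1 : ∀ v, f v ≤ 1 := by
    intro v
    by_cases hv : f v = 0
    · omega
    · have := hone v (by simp [hDF, hv])
      omega
  constructor
  · ext v
    simp only [Set.mem_setOf_eq, Set.mem_empty_iff_false, iff_false]
    have := hfle1 v
    omega
  · have : {v | f v = 1} = D := by
      ext v
      simp only [Set.mem_setOf_eq, hD]
      have := hfle1 v
      omega
    rw [this]
    exact hRDS
end

section
/- Let T be a tree belonging to the family F built from P_4 by repeatedly either (O1) adding a path P_3 with an end-vertex u joined to a previously-designated leaf x, or (O2) adding a healthy spider S_{t,t} with center u joined to a previously-designated leaf x (where LV(T_i) records vertices that were leaves at some stage). Then the set LV(T) is a packing in T: any two distinct vertices of LV(T) are at distance at least 3. -/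
open SimpleGraph Finset

/-- D is a restrained dominating set of the graph G restricted to vertex set vs. -/
def IsRDSOn (G : SimpleGraph ℕ) (vs D : Finset ℕ) : Prop :=
  D ⊆ vs ∧ ∀ v ∈ vs, v ∉ D → (∃ u ∈ D, G.Adj v u) ∧ ∃ u ∈ vs, u ∉ D ∧ G.Adj v u

/-- The restrained domination number of G on vertex set vs. -/
noncomputable def rdnOn (G : SimpleGraph ℕ) (vs : Finset ℕ) : ℕ :=
  sInf {n | ∃ D : Finset ℕ, IsRDSOn G vs D ∧ D.card = n}

open Classical in
/-- f is a restrained Italian dominating function of G on vertex set vs. -/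
def IsRIDFOn (G : SimpleGraph ℕ) (vs : Finset ℕ) (f : ℕ → ℕ) : Prop :=
  (∀ v ∈ vs, f v ≤ 2) ∧
  (∀ v ∈ vs, f v = 0 → 2 ≤ ∑ u ∈ vs.filter (fun u => G.Adj v u), f u) ∧
  (∀ v ∈ vs, f v = 0 → ∃ u ∈ vs, G.Adj v u ∧ f u = 0)

/-- The restrained Italian domination number of G on vertex set vs. -/
noncomputable def ridnOn (G : SimpleGraph ℕ) (vs : Finset ℕ) : ℕ :=
  sInf {n | ∃ f : ℕ → ℕ, IsRIDFOn G vs f ∧ ∑ v ∈ vs, f v = n}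

/-- The family 𝓕 of trees built from P₄ by operations O1 (attach an end-vertex of a new
P₃ to a vertex of LV) and O2 (attach the center of a new healthy spider S_{t,t} to a
vertex of LV).  `InF G vs lv` means: the graph G with vertex set vs is in the family,
with lv the set LV of vertices that were leaves at some stage of the construction. -/
inductive InF : SimpleGraph ℕ → Finset ℕ → Finset ℕ → Prop where
  | base (a b c d : ℕ) (hab : a ≠ b) (hac : a ≠ c) (had : a ≠ d) (hbc : b ≠ c)
      (hbd : b ≠ d) (hcd : c ≠ d) :
      InF (SimpleGraph.fromEdgeSet {s(a, b), s(b, c), s(c, d)}) {a, b, c, d} {a, d}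
  | o1 (G : SimpleGraph ℕ) (vs lv : Finset ℕ) (x u v w : ℕ) (hG : InF G vs lv)
      (hx : x ∈ lv) (hu : u ∉ vs) (hv : v ∉ vs) (hw : w ∉ vs)
      (huv : u ≠ v) (huw : u ≠ w) (hvw : v ≠ w) :
      InF (G ⊔ SimpleGraph.fromEdgeSet {s(x, u), s(u, v), s(v, w)})
        (vs ∪ {u, v, w}) (lv ∪ {w})
  | o2 (G : SimpleGraph ℕ) (vs lv : Finset ℕ) (x : ℕ) (t : ℕ) (u : ℕ)
      (mid lf : Fin t → ℕ) (ht : 1 ≤ t) (hG : InF G vs lv) (hx : x ∈ lv)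
      (hu : u ∉ vs) (hmid : ∀ i, mid i ∉ vs) (hlf : ∀ i, lf i ∉ vs)
      (hinj : Function.Injective
        (fun p : Fin t ⊕ Fin t ⊕ Unit => Sum.elim mid (Sum.elim lf fun _ => u) p)) :
      InF (G ⊔ SimpleGraph.fromEdgeSet
          (({s(x, u)} : Set (Sym2 ℕ)) ∪ ⋃ i : Fin t, {s(u, mid i), s(mid i, lf i)}))
        (vs ∪ ({u} ∪ Finset.image mid Finset.univ ∪ Finset.image lf Finset.univ))
        (lv ∪ Finset.image lf Finset.univ)

lemma three_le_dist_aux (G : SimpleGraph ℕ) (a b : ℕ)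
    (hr : G.Reachable a b) (hne : a ≠ b) (hadj : ¬ G.Adj a b)
    (hcn : ∀ z, ¬ (G.Adj a z ∧ G.Adj z b)) : 3 ≤ G.dist a b := by
  obtain ⟨p, hp⟩ := hr.exists_walk_length_eq_dist
  by_contra hlt
  push_neg at hlt
  cases p with
  | nil => exact hne rfl
  | cons h1 q =>
    cases q with
    | nil => exact hadj h1
    | cons h2 r =>
      cases r with
      | nil => exact hcn _ ⟨h1, h2⟩
      | cons h3 s => simp [SimpleGraph.Walk.length_cons] at hp; omega

lemma flip_pack (G : SimpleGraph ℕ) (a b : ℕ)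
    (h : G.Reachable a b ∧ ¬G.Adj a b ∧ ∀ z, ¬(G.Adj a z ∧ G.Adj z b)) :
    G.Reachable b a ∧ ¬G.Adj b a ∧ ∀ z, ¬(G.Adj b z ∧ G.Adj z a) :=
  ⟨h.1.symm, fun hh => h.2.1 hh.symm, fun z hz => h.2.2 z ⟨hz.2.symm, hz.1.symm⟩⟩

lemma extend_old (G H : SimpleGraph ℕ) (vs : Finset ℕ) (x u : ℕ) (hu : u ∉ vs)
    (hGvs : ∀ p q, G.Adj p q → p ∈ vs ∧ q ∈ vs)
    (hHx : ∀ p q, H.Adj p q → p ∈ vs → p = x ∧ q = u)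
    (a b : ℕ) (ha : a ∈ vs) (hb : b ∈ vs) (hab : a ≠ b)
    (hold : G.Reachable a b ∧ ¬G.Adj a b ∧ ∀ z, ¬(G.Adj a z ∧ G.Adj z b)) :
    (G ⊔ H).Reachable a b ∧ ¬(G ⊔ H).Adj a b ∧
      ∀ z, ¬((G ⊔ H).Adj a z ∧ (G ⊔ H).Adj z b) := by
  obtain ⟨hr, hna, hcn⟩ := hold
  refine ⟨hr.mono le_sup_left, ?_, ?_⟩
  · rintro (h | h)
    · exact hna h
    · exact hu ((hHx a b h ha).2 ▸ hb)
  · rintro z ⟨(h1 | h1), (h2 | h2)⟩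
    · exact hcn z ⟨h1, h2⟩
    · obtain ⟨-, hzu⟩ := hHx b z h2.symm hb
      exact hu (hzu ▸ (hGvs a z h1).2)
    · obtain ⟨-, hzu⟩ := hHx a z h1 ha
      exact hu (hzu ▸ (hGvs z b h2).1)
    · obtain ⟨h3, hzu⟩ := hHx a z h1 ha
      obtain ⟨h4, -⟩ := hHx b z h2.symm hb
      exact hab (h3.trans h4.symm)

set_option maxHeartbeats 1600000 in
lemma InF.invariant {G : SimpleGraph ℕ} {vs lv : Finset ℕ} (h : InF G vs lv) :
    (∀ p q, G.Adj p q → p ∈ vs ∧ q ∈ vs) ∧ lv ⊆ vs ∧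
      ∀ p ∈ lv, ∀ q ∈ lv, p ≠ q →
        G.Reachable p q ∧ ¬G.Adj p q ∧ ∀ z, ¬(G.Adj p z ∧ G.Adj z q) := by
  induction h with
  | base a b c d hab hac had hbc hbd hcd =>
    set P := SimpleGraph.fromEdgeSet {s(a, b), s(b, c), s(c, d)} with hPdef
    have hP : ∀ p q, P.Adj p q ↔ ((p=a∧q=b)∨(p=b∧q=a)∨(p=b∧q=c)∨(p=c∧q=b)∨(p=c∧q=d)∨(p=d∧q=c)) := by
      intro p q
      constructor
      · intro h
        have hne := h.ne
        rw [hPdef] at h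
        simp only [SimpleGraph.fromEdgeSet_adj, Set.mem_insert_iff,
          Set.mem_singleton_iff, Sym2.eq_iff] at h
        tauto
      · intro h
        rw [hPdef]
        simp only [SimpleGraph.fromEdgeSet_adj, Set.mem_insert_iff,
          Set.mem_singleton_iff, Sym2.eq_iff]
        refine ⟨by tauto, by omega⟩
    refine ⟨?_, ?_, ?_⟩
    · intro p q h
      rw [hP] at h
      simp only [Finset.mem_insert, Finset.mem_singleton]
      tauto
    · intro y hy
      simp only [Finset.mem_insert, Finset.mem_singleton] at hy ⊢
      tauto
    · have key : P.Reachable a d ∧ ¬P.Adj a d ∧ ∀ z, ¬(P.Adj a z ∧ P.Adj z d) := by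
        refine ⟨⟨Walk.cons ((hP a b).mpr (by tauto)) (Walk.cons ((hP b c).mpr (by tauto))
          (Walk.cons ((hP c d).mpr (by tauto)) Walk.nil))⟩, ?_, ?_⟩
        · rw [hP]; omega
        · intro z ⟨h1, h2⟩
          rw [hP] at h1 h2
          omega
      intro p hp q hq hpq
      simp only [Finset.mem_insert, Finset.mem_singleton] at hp hq
      rcases hp with rfl | rfl <;> rcases hq with rfl | rfl
      · exact absurd rfl hpq
      · exact key
      · exact ⟨key.1.symm, fun h => key.2.1 h.symm, fun z hz => key.2.2 z ⟨hz.2.symm, hz.1.symm⟩⟩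
      · exact absurd rfl hpq

  | o1 G vs lv x u v w hG hx hu hv hw huv huw hvw ih =>
    set H := SimpleGraph.fromEdgeSet {s(x, u), s(u, v), s(v, w)} with hHdef
    set nvs := vs ∪ {u, v, w} with hnvsdef
    obtain ⟨hGvs, hlvs, hmain⟩ := ih
    have hxvs : x ∈ vs := hlvs hx
    have hux : u ≠ x := fun h => hu (h ▸ hxvs)
    have hH : ∀ p q, H.Adj p q ↔
        ((p=x∧q=u)∨(p=u∧q=x)∨(p=u∧q=v)∨(p=v∧q=u)∨(p=v∧q=w)∨(p=w∧q=v)) := by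
      intro p q
      constructor
      · intro h
        have hne := h.ne
        rw [hHdef] at h
        simp only [SimpleGraph.fromEdgeSet_adj, Set.mem_insert_iff,
          Set.mem_singleton_iff, Sym2.eq_iff] at h
        tauto
      · intro h
        rw [hHdef]
        simp only [SimpleGraph.fromEdgeSet_adj, Set.mem_insert_iff,
          Set.mem_singleton_iff, Sym2.eq_iff]
        refine ⟨by tauto, by omega⟩
    have hHx : ∀ p q, H.Adj p q → p ∈ vs → p = x ∧ q = u := by
      intro p q h hp
      rw [hH] at h
      rcases h with ⟨rfl,rfl⟩|⟨rfl,rfl⟩|⟨rfl,rfl⟩|⟨rfl,rfl⟩|⟨rfl,rfl⟩|⟨rfl,rfl⟩ <;>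
        first | exact ⟨rfl, rfl⟩ | exact absurd hp (by assumption)
    have hvsn : vs ⊆ nvs := Finset.subset_union_left
    have hun : u ∈ nvs := by simp [hnvsdef]
    have hvn : v ∈ nvs := by simp [hnvsdef]
    have hwn : w ∈ nvs := by simp [hnvsdef]
    refine ⟨?_, ?_, ?_⟩
    · rintro p q (h | h)
      · exact ⟨hvsn (hGvs p q h).1, hvsn (hGvs p q h).2⟩
      · rw [hH] at h
        rcases h with ⟨rfl,rfl⟩|⟨rfl,rfl⟩|⟨rfl,rfl⟩|⟨rfl,rfl⟩|⟨rfl,rfl⟩|⟨rfl,rfl⟩ <;>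
          exact ⟨by first | exact hvsn hxvs | assumption, by first | exact hvsn hxvs | assumption⟩
    · intro y hy
      rcases Finset.mem_union.mp hy with h | h
      · exact hvsn (hlvs h)
      · simp only [Finset.mem_singleton] at h; exact h ▸ hwn
    · -- main
      have hxu : (G ⊔ H).Adj x u := by rw [sup_adj, hH]; omega
      have huv' : (G ⊔ H).Adj u v := by rw [sup_adj, hH]; omega
      have hvw' : (G ⊔ H).Adj v w := by rw [sup_adj, hH]; omega
      have keyw : ∀ p ∈ lv, (G ⊔ H).Reachable p w ∧ ¬(G ⊔ H).Adj p w ∧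
          ∀ z, ¬((G ⊔ H).Adj p z ∧ (G ⊔ H).Adj z w) := by
        intro p hp
        have hpvs : p ∈ vs := hlvs hp
        refine ⟨?_, ?_, ?_⟩
        · have hxw : (G ⊔ H).Reachable x w :=
            ⟨Walk.cons hxu (Walk.cons huv' (Walk.cons hvw' Walk.nil))⟩
          by_cases hpx : p = x
          · exact hpx ▸ hxw
          · exact ((hmain p hp x hx hpx).1.mono le_sup_left).trans hxw
        · rintro (h | h)
          · exact hw (hGvs p w h).2
          · obtain ⟨-, h2⟩ := hHx p w h hpvs
            exact huw h2.symm
        · rintro z ⟨h1, h2⟩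
          have hzv : z = v := by
            rcases h2 with h2 | h2
            · exact absurd (hGvs z w h2).2 hw
            · rw [hH] at h2
              have hwx : w ≠ x := fun h => hw (h ▸ hxvs)
              omega
          rw [hzv] at h1
          rcases h1 with h1 | h1
          · exact hv (hGvs p v h1).2
          · obtain ⟨-, h2⟩ := hHx p v h1 hpvs
            exact huv h2.symm
      intro p hp q hq hpq
      rcases Finset.mem_union.mp hp with hp | hp <;> rcases Finset.mem_union.mp hq with hq | hq
      · exact extend_old G H vs x u hu hGvs hHx p q (hlvs hp) (hlvs hq) hpq (hmain p hp q hq hpq)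
      · simp only [Finset.mem_singleton] at hq
        exact hq ▸ keyw p hp
      · simp only [Finset.mem_singleton] at hp
        rw [hp]
        exact flip_pack _ _ _ (keyw q hq)
      · simp only [Finset.mem_singleton] at hp hq
        exact absurd (hp.trans hq.symm) hpq

  | o2 G vs lv x t u mid lf ht hG hx hu hmid hlf hinj ih =>
    set H := SimpleGraph.fromEdgeSet
      (({s(x, u)} : Set (Sym2 ℕ)) ∪ ⋃ i : Fin t, {s(u, mid i), s(mid i, lf i)}) with hHdef
    set nvs := vs ∪ ({u} ∪ Finset.image mid Finset.univ ∪ Finset.image lf Finset.univ) with hnvs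
    obtain ⟨hGvs, hlvs, hmain⟩ := ih
    have hxvs : x ∈ vs := hlvs hx
    have hux : u ≠ x := fun h => hu (h ▸ hxvs)
    have hmu : ∀ i, mid i ≠ u := fun i h => by
      have := @hinj (Sum.inl i) (Sum.inr (Sum.inr ())) (by simpa using h); simp at this
    have hlu : ∀ i, lf i ≠ u := fun i h => by
      have := @hinj (Sum.inr (Sum.inl i)) (Sum.inr (Sum.inr ())) (by simpa using h); simp at this
    have hml : ∀ i j, mid i ≠ lf j := fun i j h => by
      have := @hinj (Sum.inl i) (Sum.inr (Sum.inl j)) (by simpa using h); simp at this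
    have hminj : ∀ i j, mid i = mid j → i = j := fun i j h => by
      have := @hinj (Sum.inl i) (Sum.inl j) (by simpa using h); simpa using this
    have hlinj : ∀ i j, lf i = lf j → i = j := fun i j h => by
      have := @hinj (Sum.inr (Sum.inl i)) (Sum.inr (Sum.inl j)) (by simpa using h); simpa using this
    have hH : ∀ p q, H.Adj p q ↔ ((p=x∧q=u)∨(p=u∧q=x)) ∨
        ∃ i, ((p=u∧q=mid i)∨(p=mid i∧q=u)∨(p=mid i∧q=lf i)∨(p=lf i∧q=mid i)) := by
      intro p q
      rw [hHdef]
      simp only [SimpleGraph.fromEdgeSet_adj, Set.mem_union, Set.mem_singleton_iff,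
        Set.mem_iUnion, Set.mem_insert_iff, Sym2.eq_iff]
      constructor
      · rintro ⟨h | ⟨i, h⟩, hne⟩
        · tauto
        · exact Or.inr ⟨i, by tauto⟩
      · intro h
        refine ⟨?_, ?_⟩
        · rcases h with h | ⟨i, h⟩
          · tauto
          · exact Or.inr ⟨i, by tauto⟩
        · rcases h with (⟨rfl,rfl⟩|⟨rfl,rfl⟩) | ⟨i, (⟨rfl,rfl⟩|⟨rfl,rfl⟩|⟨rfl,rfl⟩|⟨rfl,rfl⟩)⟩
          · exact fun h => hux h.symm
          · exact hux
          · exact fun h => hmu i h.symm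
          · exact hmu i
          · exact hml i i
          · exact fun h => hml i i h.symm
    have hHx : ∀ p q, H.Adj p q → p ∈ vs → p = x ∧ q = u := by
      intro p q h hp
      rw [hH] at h
      rcases h with (⟨rfl,rfl⟩|⟨rfl,rfl⟩) | ⟨i, (⟨rfl,rfl⟩|⟨rfl,rfl⟩|⟨rfl,rfl⟩|⟨rfl,rfl⟩)⟩
      · exact ⟨rfl, rfl⟩
      · exact absurd hp hu
      · exact absurd hp hu
      · exact absurd hp (hmid i)
      · exact absurd hp (hmid i)
      · exact absurd hp (hlf i)
    have hvsn : vs ⊆ nvs := Finset.subset_union_left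
    have hun : u ∈ nvs := by simp [hnvs]
    have hmn : ∀ i, mid i ∈ nvs := fun i => by
      simp only [hnvs, Finset.mem_union, Finset.mem_image, Finset.mem_singleton]
      exact Or.inr (Or.inl (Or.inr ⟨i, Finset.mem_univ i, rfl⟩))
    have hln : ∀ i, lf i ∈ nvs := fun i => by
      simp only [hnvs, Finset.mem_union, Finset.mem_image, Finset.mem_singleton]
      exact Or.inr (Or.inr ⟨i, Finset.mem_univ i, rfl⟩)
    -- adjacency building blocks
    have hxu : (G ⊔ H).Adj x u := by
      rw [sup_adj, hH]; exact Or.inr (Or.inl (Or.inl ⟨rfl, rfl⟩))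
    have hum : ∀ i, (G ⊔ H).Adj u (mid i) := fun i => by
      rw [sup_adj, hH]; exact Or.inr (Or.inr ⟨i, Or.inl ⟨rfl, rfl⟩⟩)
    have hmlf : ∀ i, (G ⊔ H).Adj (mid i) (lf i) := fun i => by
      rw [sup_adj, hH]; exact Or.inr (Or.inr ⟨i, Or.inr (Or.inr (Or.inl ⟨rfl, rfl⟩))⟩)
    have hnbr : ∀ z j, H.Adj z (lf j) → z = mid j := by
      intro z j h
      rw [hH] at h
      rcases h with (⟨rfl,h⟩|⟨rfl,h⟩) | ⟨i, (⟨rfl,h⟩|⟨rfl,h⟩|⟨rfl,h⟩|⟨rfl,h⟩)⟩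
      · exact absurd h (hlu j)
      · exact absurd (h ▸ hxvs) (hlf j)
      · exact absurd h.symm (hml i j)
      · exact absurd h (hlu j)
      · exact congrArg mid (hlinj j i h).symm
      · exact absurd h.symm (hml i j)
    have hnbr2 : ∀ i j, H.Adj (lf i) (mid j) → i = j := by
      intro i j h
      rw [hH] at h
      rcases h with (⟨h1,h2⟩|⟨h1,h2⟩) | ⟨k, (⟨h1,h2⟩|⟨h1,h2⟩|⟨h1,h2⟩|⟨h1,h2⟩)⟩
      · exact absurd (h1 ▸ hxvs) (hlf i)
      · exact absurd h1 (hlu i)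
      · exact absurd h1 (hlu i)
      · exact absurd h1.symm (hml k i)
      · exact absurd h1.symm (hml k i)
      · exact (hlinj i k h1).trans (hminj j k h2).symm
    refine ⟨?_, ?_, ?_⟩
    · rintro p q (h | h)
      · exact ⟨hvsn (hGvs p q h).1, hvsn (hGvs p q h).2⟩
      · rw [hH] at h
        rcases h with (⟨rfl,rfl⟩|⟨rfl,rfl⟩) | ⟨i, (⟨rfl,rfl⟩|⟨rfl,rfl⟩|⟨rfl,rfl⟩|⟨rfl,rfl⟩)⟩
        · exact ⟨hvsn hxvs, hun⟩
        · exact ⟨hun, hvsn hxvs⟩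
        · exact ⟨hun, hmn i⟩
        · exact ⟨hmn i, hun⟩
        · exact ⟨hmn i, hln i⟩
        · exact ⟨hln i, hmn i⟩
    · intro y hy
      rcases Finset.mem_union.mp hy with h | h
      · exact hvsn (hlvs h)
      · obtain ⟨i, -, rfl⟩ := Finset.mem_image.mp h
        exact hln i
    · have keylf : ∀ p ∈ lv, ∀ j, (G ⊔ H).Reachable p (lf j) ∧ ¬(G ⊔ H).Adj p (lf j) ∧
          ∀ z, ¬((G ⊔ H).Adj p z ∧ (G ⊔ H).Adj z (lf j)) := by
        intro p hp j
        have hpvs : p ∈ vs := hlvs hp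
        refine ⟨?_, ?_, ?_⟩
        · have hxl : (G ⊔ H).Reachable x (lf j) :=
            ⟨Walk.cons hxu (Walk.cons (hum j) (Walk.cons (hmlf j) Walk.nil))⟩
          by_cases hpx : p = x
          · exact hpx ▸ hxl
          · exact ((hmain p hp x hx hpx).1.mono le_sup_left).trans hxl
        · rintro (h | h)
          · exact hlf j (hGvs p (lf j) h).2
          · exact hlu j (hHx p (lf j) h hpvs).2
        · rintro z ⟨h1, h2⟩
          have hzm : z = mid j := by
            rcases h2 with h2 | h2
            · exact absurd (hGvs z (lf j) h2).2 (hlf j)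
            · exact hnbr z j h2
          rw [hzm] at h1
          rcases h1 with h1 | h1
          · exact hmid j (hGvs p (mid j) h1).2
          · exact hmu j (hHx p (mid j) h1 hpvs).2
      have keyll : ∀ i j, lf i ≠ lf j →
          (G ⊔ H).Reachable (lf i) (lf j) ∧ ¬(G ⊔ H).Adj (lf i) (lf j) ∧
          ∀ z, ¬((G ⊔ H).Adj (lf i) z ∧ (G ⊔ H).Adj z (lf j)) := by
        intro i j hij
        refine ⟨?_, ?_, ?_⟩
        · exact ⟨Walk.cons (hmlf i).symm (Walk.cons (hum i).symm
            (Walk.cons (hum j) (Walk.cons (hmlf j) Walk.nil)))⟩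
        · rintro (h | h)
          · exact hlf i (hGvs _ _ h).1
          · exact hml j i (hnbr (lf i) j h).symm
        · rintro z ⟨h1, h2⟩
          have hzm : z = mid j := by
            rcases h2 with h2 | h2
            · exact absurd (hGvs z (lf j) h2).2 (hlf j)
            · exact hnbr z j h2
          rw [hzm] at h1
          rcases h1 with h1 | h1
          · exact hmid j (hGvs _ _ h1).2
          · exact hij (congrArg lf (hnbr2 i j h1))
      intro p hp q hq hpq
      rcases Finset.mem_union.mp hp with hp' | hp' <;>
        rcases Finset.mem_union.mp hq with hq' | hq'
      · exact extend_old G H vs x u hu hGvs hHx p q (hlvs hp') (hlvs hq') hpq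
          (hmain p hp' q hq' hpq)
      · obtain ⟨j, -, rfl⟩ := Finset.mem_image.mp hq'
        exact keylf p hp' j
      · obtain ⟨i, -, rfl⟩ := Finset.mem_image.mp hp'
        exact flip_pack _ _ _ (keylf q hq' i)
      · obtain ⟨i, -, rfl⟩ := Finset.mem_image.mp hp'
        obtain ⟨j, -, rfl⟩ := Finset.mem_image.mp hq'
        exact keyll i j hpq


/-- For a tree in the family 𝓕, the set LV is a packing: any two distinct vertices of
LV are at distance at least 3. -/
theorem lv_packing (G : SimpleGraph ℕ) (vs lv : Finset ℕ) (h : InF G vs lv) :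
    ∀ a ∈ lv, ∀ b ∈ lv, a ≠ b → 3 ≤ G.dist a b := by
  intro a ha b hb hab
  obtain ⟨-, -, hm⟩ := h.invariant
  obtain ⟨hr, hna, hcn⟩ := hm a ha b hb hab
  exact three_le_dist_aux G a b hr hab hna hcn
end

section
/- Let T be a tree in the family F (built from P_4 by operations O1: attach a P_3 via one of its end-vertices to a leaf-type vertex, and O2: attach the center of a healthy spider S_{t,t} to a leaf-type vertex). Then LV(T), the set of vertices that were leaves at some stage of the construction, is a minimum dominating set of T. -/
open SimpleGraph Finset

/-- D is a dominating set of the graph G restricted to vertex set vs. -/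
def IsDomOn (G : SimpleGraph ℕ) (vs D : Finset ℕ) : Prop :=
  D ⊆ vs ∧ ∀ v ∈ vs, v ∉ D → ∃ u ∈ D, G.Adj v u


lemma InF.lv_subset {G : SimpleGraph ℕ} {vs lv : Finset ℕ} (h : InF G vs lv) : lv ⊆ vs := by
  induction h with
  | base a b c d => intro y hy; simp only [mem_insert, mem_singleton] at hy ⊢; tauto
  | o1 G vs lv x u v w hG hx hu hv hw huv huw hvw ih =>
      intro y hy; simp only [mem_union, mem_insert, mem_singleton] at hy ⊢; tauto
  | o2 G vs lv x t u mid lf ht hG hx hu hmid hlf hinj ih =>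
      intro y hy; simp only [mem_union] at hy ⊢; tauto

lemma InF.adj_mem {G : SimpleGraph ℕ} {vs lv : Finset ℕ} (h : InF G vs lv) :
    ∀ p q, G.Adj p q → p ∈ vs ∧ q ∈ vs := by
  induction h with
  | base a b c d hab hac had hbc hbd hcd =>
      intro p q hpq
      simp only [fromEdgeSet_adj, Set.mem_insert_iff, Set.mem_singleton_iff, Sym2.eq_iff] at hpq
      simp only [mem_insert, mem_singleton]
      tauto
  | o1 G vs lv x u v w hG hx hu hv hw huv huw hvw ih =>
      intro p q hpq
      have hxvs : x ∈ vs := hG.lv_subset hx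
      rcases hpq with hpq | hpq
      · have := ih p q hpq
        simp only [mem_union, mem_insert, mem_singleton]; tauto
      · simp only [fromEdgeSet_adj, Set.mem_insert_iff, Set.mem_singleton_iff, Sym2.eq_iff] at hpq
        simp only [mem_union, mem_insert, mem_singleton]
        rcases hpq with ⟨h1 | h1 | h1, _⟩ <;> rcases h1 with ⟨rfl, rfl⟩ | ⟨rfl, rfl⟩ <;> tauto
  | o2 G vs lv x t u mid lf ht hG hx hu hmid hlf hinj ih =>
      intro p q hpq
      have hxvs : x ∈ vs := hG.lv_subset hx
      rcases hpq with hpq | hpq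
      · have := ih p q hpq
        simp only [mem_union]; tauto
      · simp only [fromEdgeSet_adj, Set.mem_union, Set.mem_singleton_iff, Set.mem_iUnion,
          Set.mem_insert_iff, Sym2.eq_iff] at hpq
        obtain ⟨h1 | ⟨i, h1 | h1⟩, _⟩ := hpq <;>
          rcases h1 with ⟨rfl, rfl⟩ | ⟨rfl, rfl⟩ <;>
          simp only [mem_union, mem_image, mem_singleton, mem_univ, true_and] <;>
          tauto

lemma two_le_card' {D : Finset ℕ} {y z : ℕ} (hy : y ∈ D) (hz : z ∈ D) (h : y ≠ z) :
    2 ≤ D.card := by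
  have hsub : ({y, z} : Finset ℕ) ⊆ D := by
    intro w hw; simp only [mem_insert, mem_singleton] at hw
    rcases hw with rfl | rfl <;> assumption
  calc 2 = ({y, z} : Finset ℕ).card := (Finset.card_pair h).symm
    _ ≤ D.card := Finset.card_le_card hsub

/-- For a tree in the family 𝓕, the set LV is a minimum dominating set. -/
theorem lv_min_dominating (G : SimpleGraph ℕ) (vs lv : Finset ℕ) (h : InF G vs lv) :
    IsDomOn G vs lv ∧ ∀ D : Finset ℕ, IsDomOn G vs D → lv.card ≤ D.card := by
  induction h with
  | base a b c d hab hac had hbc hbd hcd =>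
      constructor
      · constructor
        · intro y hy; simp only [mem_insert, mem_singleton] at hy ⊢; tauto
        · intro y hy hyn
          simp only [mem_insert, mem_singleton] at hy hyn
          push_neg at hyn
          rcases hy with rfl | rfl | rfl | rfl
          · exact absurd rfl hyn.1
          · refine ⟨a, by simp, ?_⟩
            simp only [fromEdgeSet_adj, Set.mem_insert_iff, Set.mem_singleton_iff, Sym2.eq_iff]
            tauto
          · refine ⟨d, by simp, ?_⟩
            simp only [fromEdgeSet_adj, Set.mem_insert_iff, Set.mem_singleton_iff, Sym2.eq_iff]
            tauto
          · exact absurd rfl hyn.2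
      · intro D ⟨hDsub, hDdom⟩
        have hcard : ({a, d} : Finset ℕ).card = 2 := Finset.card_pair had
        rw [hcard]
        have hya : ∃ y ∈ D, y = a ∨ y = b := by
          by_cases haD : a ∈ D
          · exact ⟨a, haD, Or.inl rfl⟩
          · obtain ⟨y, hyD, hadj⟩ := hDdom a (by simp) haD
            refine ⟨y, hyD, ?_⟩
            simp only [fromEdgeSet_adj, Set.mem_insert_iff, Set.mem_singleton_iff, Sym2.eq_iff] at hadj
            rcases hadj with ⟨h1 | h1 | h1, hne⟩ <;> tauto
        have hyd : ∃ y ∈ D, y = c ∨ y = d := by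
          by_cases hdD : d ∈ D
          · exact ⟨d, hdD, Or.inr rfl⟩
          · obtain ⟨y, hyD, hadj⟩ := hDdom d (by simp) hdD
            refine ⟨y, hyD, ?_⟩
            simp only [fromEdgeSet_adj, Set.mem_insert_iff, Set.mem_singleton_iff, Sym2.eq_iff] at hadj
            rcases hadj with ⟨h1 | h1 | h1, hne⟩ <;> tauto
        obtain ⟨y, hyD, hy⟩ := hya
        obtain ⟨z, hzD, hz⟩ := hyd
        have : y ≠ z := by rcases hy with rfl | rfl <;> rcases hz with rfl | rfl <;> tauto
        exact two_le_card' hyD hzD this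
  | o1 G vs lv x u v w hG hx hu hv hw huv huw hvw ih =>
      have hlvsub : lv ⊆ vs := hG.lv_subset
      have hadjmem : ∀ p q, G.Adj p q → p ∈ vs ∧ q ∈ vs := hG.adj_mem
      have hxvs : x ∈ vs := hlvsub hx
      have hxu : x ≠ u := fun h => hu (h ▸ hxvs)
      have hxv : x ≠ v := fun h => hv (h ▸ hxvs)
      have hxw : x ≠ w := fun h => hw (h ▸ hxvs)
      set H := SimpleGraph.fromEdgeSet {s(x, u), s(u, v), s(v, w)} with hH
      have key : ∀ v' y, v' ∈ vs → (G ⊔ H).Adj v' y → G.Adj v' y ∨ (v' = x ∧ y = u) := by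
        intro v' y hv' hadj
        rcases hadj with hadj | hadj
        · exact Or.inl hadj
        · right
          simp only [hH, fromEdgeSet_adj, Set.mem_insert_iff, Set.mem_singleton_iff,
            Sym2.eq_iff] at hadj
          obtain ⟨h1, hne⟩ := hadj
          rcases h1 with (⟨h2, h3⟩ | ⟨h2, h3⟩) | (⟨h2, h3⟩ | ⟨h2, h3⟩) | (⟨h2, h3⟩ | ⟨h2, h3⟩) <;>
            first
              | exact ⟨h2, h3⟩
              | (subst h2; first
                  | exact absurd hv' hu
                  | exact absurd hv' hv
                  | exact absurd hv' hw)
      constructor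
      · constructor
        · intro y hy
          simp only [mem_union, mem_insert, mem_singleton] at hy ⊢
          rcases hy with hy | hy
          · have := hlvsub hy; tauto
          · tauto
        · intro v' hv' hv'n
          simp only [mem_union, mem_insert, mem_singleton] at hv' hv'n
          push_neg at hv'n
          rcases hv' with hv' | rfl | rfl | rfl
          · obtain ⟨y, hyl, hadj⟩ := ih.1.2 v' hv' hv'n.1
            exact ⟨y, by simp [hyl], Or.inl hadj⟩
          · refine ⟨x, by simp [hx], Or.inr ?_⟩
            simp only [hH, fromEdgeSet_adj, Set.mem_insert_iff, Set.mem_singleton_iff, Sym2.eq_iff]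
            tauto
          · refine ⟨w, by simp, Or.inr ?_⟩
            simp only [hH, fromEdgeSet_adj, Set.mem_insert_iff, Set.mem_singleton_iff, Sym2.eq_iff]
            tauto
          · exact absurd rfl hv'n.2
      · intro D ⟨hDsub, hDdom⟩
        classical
        have hvwD : v ∈ D ∨ w ∈ D := by
          by_cases hwD : w ∈ D
          · exact Or.inr hwD
          · obtain ⟨y, hyD, hadj⟩ := hDdom w (by simp) hwD
            left
            rcases hadj with hadj | hadj
            · exact absurd (hadjmem w y hadj).1 hw
            · simp only [hH, fromEdgeSet_adj, Set.mem_insert_iff, Set.mem_singleton_iff,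
                Sym2.eq_iff] at hadj
              obtain ⟨h1, hne⟩ := hadj
              rcases h1 with (⟨h2, h3⟩ | ⟨h2, h3⟩) | (⟨h2, h3⟩ | ⟨h2, h3⟩) | (⟨h2, h3⟩ | ⟨h2, h3⟩) <;>
                first | omega | (subst h3; exact hyD)
        set S : Finset ℕ := {u, v, w} with hS
        set D' : Finset ℕ := if u ∈ D then insert x (D \ S) else D \ S with hD'
        have hD'sub : D' ⊆ vs := by
          intro y hy
          have hDS : D \ S ⊆ vs := by
            intro z hz
            simp only [mem_sdiff, hS, mem_insert, mem_singleton] at hz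
            have := hDsub hz.1
            simp only [mem_union, hS, mem_insert, mem_singleton] at this
            tauto
          rw [hD'] at hy
          split_ifs at hy with huD
          · simp only [mem_insert] at hy
            rcases hy with rfl | hy
            · exact hxvs
            · exact hDS hy
          · exact hDS hy
        have hD'dom : IsDomOn G vs D' := by
          refine ⟨hD'sub, ?_⟩
          intro v' hv' hv'n
          have hv'nS : v' ∉ S := by
            simp only [hS, mem_insert, mem_singleton]
            push_neg
            exact ⟨fun h => hu (h ▸ hv'), fun h => hv (h ▸ hv'), fun h => hw (h ▸ hv')⟩
          have hv'nD : v' ∉ D := by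
            intro hc
            have hmem : v' ∈ D \ S := mem_sdiff.mpr ⟨hc, hv'nS⟩
            rw [hD'] at hv'n
            split_ifs at hv'n with huD
            · exact hv'n (mem_insert_of_mem hmem)
            · exact hv'n hmem
          obtain ⟨y, hyD, hadj⟩ := hDdom v' (by simp [hv']) hv'nD
          rcases key v' y hv' hadj with hadj' | ⟨rfl, rfl⟩
          · have hyvs : y ∈ vs := (hadjmem v' y hadj').2
            have hynS : y ∉ S := by
              simp only [hS, mem_insert, mem_singleton]
              push_neg
              exact ⟨fun h => hu (h ▸ hyvs), fun h => hv (h ▸ hyvs), fun h => hw (h ▸ hyvs)⟩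
            refine ⟨y, ?_, hadj'⟩
            rw [hD']
            split_ifs with huD
            · exact mem_insert_of_mem (mem_sdiff.mpr ⟨hyD, hynS⟩)
            · exact mem_sdiff.mpr ⟨hyD, hynS⟩
          · exfalso
            apply hv'n
            rw [hD', if_pos hyD]
            exact mem_insert_self _ _
        have hcardsum : (D \ S).card + (D ∩ S).card = D.card := Finset.card_sdiff_add_card_inter D S
        have hlvle : lv.card ≤ D'.card := ih.2 D' hD'dom
        have hwlv : w ∉ lv := fun h => hw (hlvsub h)
        have hlvw : (lv ∪ {w}).card = lv.card + 1 := by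
          rw [Finset.card_union_of_disjoint (Finset.disjoint_singleton_right.mpr hwlv),
            Finset.card_singleton]
        rw [hlvw]
        by_cases huD : u ∈ D
        · have hc2 : 2 ≤ (D ∩ S).card := by
            rcases hvwD with hcD | hcD
            · exact two_le_card' (mem_inter.mpr ⟨huD, by simp [hS]⟩)
                (mem_inter.mpr ⟨hcD, by simp [hS]⟩) huv
            · exact two_le_card' (mem_inter.mpr ⟨huD, by simp [hS]⟩)
                (mem_inter.mpr ⟨hcD, by simp [hS]⟩) huw
          have hD'card : D'.card ≤ (D \ S).card + 1 := by
            rw [hD', if_pos huD]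
            exact Finset.card_insert_le _ _
          omega
        · have hc1 : 1 ≤ (D ∩ S).card := by
            rcases hvwD with hcD | hcD
            · exact Finset.card_pos.mpr ⟨v, mem_inter.mpr ⟨hcD, by simp [hS]⟩⟩
            · exact Finset.card_pos.mpr ⟨w, mem_inter.mpr ⟨hcD, by simp [hS]⟩⟩
          have hD'card : D'.card ≤ (D \ S).card := by
            rw [hD', if_neg huD]
          omega
  | o2 G vs lv x t u mid lf ht hG hx hu hmid hlf hinj ih =>
      have hlvsub : lv ⊆ vs := hG.lv_subset
      have hadjmem : ∀ p q, G.Adj p q → p ∈ vs ∧ q ∈ vs := hG.adj_mem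
      classical
      have hxvs : x ∈ vs := hlvsub hx
      have hxu : x ≠ u := fun h => hu (h ▸ hxvs)
      have hmidinj : Function.Injective mid := fun i j hij => by
        have := hinj (a₁ := Sum.inl i) (a₂ := Sum.inl j) (by simpa using hij)
        simpa using this
      have hlfinj : Function.Injective lf := fun i j hij => by
        have := hinj (a₁ := Sum.inr (Sum.inl i)) (a₂ := Sum.inr (Sum.inl j)) (by simpa using hij)
        simpa using this
      have hmidlf : ∀ i j, mid i ≠ lf j := fun i j hij => by
        have := hinj (a₁ := Sum.inl i) (a₂ := Sum.inr (Sum.inl j)) (by simpa using hij)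
        simp at this
      have hmidu : ∀ i, mid i ≠ u := fun i hij => by
        have := hinj (a₁ := Sum.inl i) (a₂ := Sum.inr (Sum.inr ())) (by simpa using hij)
        simp at this
      have hlfu : ∀ i, lf i ≠ u := fun i hij => by
        have := hinj (a₁ := Sum.inr (Sum.inl i)) (a₂ := Sum.inr (Sum.inr ())) (by simpa using hij)
        simp at this
      set H := SimpleGraph.fromEdgeSet
          (({s(x, u)} : Set (Sym2 ℕ)) ∪ ⋃ i : Fin t, {s(u, mid i), s(mid i, lf i)}) with hH
      set SF : Finset ℕ :=
          {u} ∪ Finset.image mid Finset.univ ∪ Finset.image lf Finset.univ with hSF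
      have hvsSF : ∀ y ∈ vs, y ∉ SF := by
        intro y hy hc
        simp only [hSF, mem_union, mem_singleton, mem_image, mem_univ, true_and] at hc
        rcases hc with (rfl | ⟨i, rfl⟩) | ⟨i, rfl⟩
        · exact hu hy
        · exact hmid i hy
        · exact hlf i hy
      have key : ∀ v' y, v' ∈ vs → (G ⊔ H).Adj v' y → G.Adj v' y ∨ (v' = x ∧ y = u) := by
        intro v' y hv' hadj
        rcases hadj with hadj | hadj
        · exact Or.inl hadj
        · right
          simp only [hH, fromEdgeSet_adj, Set.mem_union, Set.mem_singleton_iff, Set.mem_iUnion,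
            Set.mem_insert_iff, Sym2.eq_iff] at hadj
          obtain ⟨h1, hne⟩ := hadj
          rcases h1 with (⟨h2, h3⟩ | ⟨h2, h3⟩) | ⟨i, (⟨h2, h3⟩ | ⟨h2, h3⟩) | (⟨h2, h3⟩ | ⟨h2, h3⟩)⟩ <;>
            first
              | exact ⟨h2, h3⟩
              | (subst h2; first
                  | exact absurd hv' hu
                  | exact absurd hv' (hmid i)
                  | exact absurd hv' (hlf i))
      constructor
      · constructor
        · intro y hy
          simp only [mem_union] at hy ⊢
          rcases hy with hy | hy
          · exact Or.inl (hlvsub hy)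
          · right; simp only [hSF, mem_union]; tauto
        · intro v' hv' hv'n
          simp only [mem_union, hSF, mem_singleton, mem_image, mem_univ, true_and] at hv' hv'n
          push_neg at hv'n
          rcases hv' with hv' | (rfl | ⟨i, rfl⟩) | ⟨i, rfl⟩
          · obtain ⟨y, hyl, hadj⟩ := ih.1.2 v' hv' hv'n.1
            refine ⟨y, ?_, Or.inl hadj⟩
            simp only [mem_union]; exact Or.inl hyl
          · refine ⟨x, by simp [hx], Or.inr ?_⟩
            simp only [hH, fromEdgeSet_adj, Set.mem_union, Set.mem_singleton_iff, Set.mem_iUnion,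
              Set.mem_insert_iff, Sym2.eq_iff]
            exact ⟨by tauto, fun h => hxu h.symm⟩
          · refine ⟨lf i, by simp, Or.inr ?_⟩
            simp only [hH, fromEdgeSet_adj, Set.mem_union, Set.mem_singleton_iff, Set.mem_iUnion,
              Set.mem_insert_iff, Sym2.eq_iff]
            exact ⟨Or.inr ⟨i, Or.inr (Or.inl ⟨rfl, rfl⟩)⟩, hmidlf i i⟩
          · exact absurd rfl (hv'n.2 i)
      · intro D ⟨hDsub, hDdom⟩
        have leg : ∀ i, mid i ∈ D ∨ lf i ∈ D := by
          intro i
          by_cases hlfD : lf i ∈ D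
          · exact Or.inr hlfD
          · left
            have hmem : lf i ∈ vs ∪ SF := by
              simp only [mem_union, hSF, mem_image, mem_univ, true_and]
              exact Or.inr (Or.inr ⟨i, rfl⟩)
            obtain ⟨y, hyD, hadj⟩ := hDdom (lf i) hmem hlfD
            rcases hadj with hadj | hadj
            · exact absurd (hadjmem (lf i) y hadj).1 (hlf i)
            · simp only [hH, fromEdgeSet_adj, Set.mem_union, Set.mem_singleton_iff, Set.mem_iUnion,
                Set.mem_insert_iff, Sym2.eq_iff] at hadj
              obtain ⟨h1, hne⟩ := hadj
              rcases h1 with (⟨h2, h3⟩ | ⟨h2, h3⟩) | ⟨j, (⟨h2, h3⟩ | ⟨h2, h3⟩) | (⟨h2, h3⟩ | ⟨h2, h3⟩)⟩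
              · exact absurd (h2 ▸ hxvs) (hlf i)
              · exact absurd h2 (hlfu i)
              · exact absurd h2 (hlfu i)
              · exact absurd h2.symm (hmidlf j i)
              · exact absurd h2.symm (hmidlf j i)
              · have hji : i = j := hlfinj h2
                subst hji
                exact h3 ▸ hyD
        set g : Fin t → ℕ := fun i => if mid i ∈ D then mid i else lf i with hg
        have hgD : ∀ i, g i ∈ D := by
          intro i
          rw [hg]
          dsimp only
          split_ifs with h
          · exact h
          · rcases leg i with h' | h'
            · exact absurd h' h
            · exact h'
        have hginj : Function.Injective g := by
          intro i j hij
          rw [hg] at hij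
          dsimp only at hij
          split_ifs at hij with h1 h2 h2
          · exact hmidinj hij
          · exact absurd hij (hmidlf i j)
          · exact absurd hij.symm (hmidlf j i)
          · exact hlfinj hij
        have hgSF : ∀ i, g i ∈ SF := by
          intro i
          simp only [hSF, mem_union, mem_singleton, mem_image, mem_univ, true_and]
          rw [hg]; dsimp only
          split_ifs
          · exact Or.inl (Or.inr ⟨i, rfl⟩)
          · exact Or.inr ⟨i, rfl⟩
        have hung : u ∉ Finset.image g Finset.univ := by
          simp only [mem_image, mem_univ, true_and]
          rintro ⟨i, hi⟩
          rw [hg] at hi; dsimp only at hi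
          split_ifs at hi
          · exact hmidu i hi
          · exact hlfu i hi
        have hgcard : (Finset.image g Finset.univ).card = t := by
          rw [Finset.card_image_of_injective _ hginj, Finset.card_univ, Fintype.card_fin]
        have hgsub : Finset.image g Finset.univ ⊆ D ∩ SF := by
          intro y hy
          simp only [mem_image, mem_univ, true_and] at hy
          obtain ⟨i, rfl⟩ := hy
          exact mem_inter.mpr ⟨hgD i, hgSF i⟩
        set D' : Finset ℕ := if u ∈ D then insert x (D \ SF) else D \ SF with hD'
        have hD'sub : D' ⊆ vs := by
          intro y hy
          have hDS : D \ SF ⊆ vs := by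
            intro z hz
            rw [mem_sdiff] at hz
            have := hDsub hz.1
            rw [mem_union] at this
            tauto
          rw [hD'] at hy
          split_ifs at hy with huD
          · rcases mem_insert.mp hy with rfl | hy
            · exact hxvs
            · exact hDS hy
          · exact hDS hy
        have hD'dom : IsDomOn G vs D' := by
          refine ⟨hD'sub, ?_⟩
          intro v' hv' hv'n
          have hv'nS : v' ∉ SF := hvsSF v' hv'
          have hv'nD : v' ∉ D := by
            intro hc
            have hmem : v' ∈ D \ SF := mem_sdiff.mpr ⟨hc, hv'nS⟩
            rw [hD'] at hv'n
            split_ifs at hv'n with huD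
            · exact hv'n (mem_insert_of_mem hmem)
            · exact hv'n hmem
          obtain ⟨y, hyD, hadj⟩ := hDdom v' (by rw [mem_union]; exact Or.inl hv') hv'nD
          rcases key v' y hv' hadj with hadj' | ⟨rfl, rfl⟩
          · have hyvs : y ∈ vs := (hadjmem v' y hadj').2
            refine ⟨y, ?_, hadj'⟩
            rw [hD']
            split_ifs with huD
            · exact mem_insert_of_mem (mem_sdiff.mpr ⟨hyD, hvsSF y hyvs⟩)
            · exact mem_sdiff.mpr ⟨hyD, hvsSF y hyvs⟩
          · exfalso
            apply hv'n
            rw [hD', if_pos hyD]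
            exact mem_insert_self _ _
        have hcardsum : (D \ SF).card + (D ∩ SF).card = D.card :=
          Finset.card_sdiff_add_card_inter D SF
        have hlvle : lv.card ≤ D'.card := ih.2 D' hD'dom
        have hlfcard : (Finset.image lf Finset.univ).card = t := by
          rw [Finset.card_image_of_injective _ hlfinj, Finset.card_univ, Fintype.card_fin]
        have hlvw : (lv ∪ Finset.image lf Finset.univ).card = lv.card + t := by
          rw [Finset.card_union_of_disjoint, hlfcard]
          rw [Finset.disjoint_right]
          intro z hz
          simp only [mem_image, mem_univ, true_and] at hz
          obtain ⟨i, rfl⟩ := hz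
          exact fun h => hlf i (hlvsub h)
        rw [hlvw]
        by_cases huD : u ∈ D
        · have hc : t + 1 ≤ (D ∩ SF).card := by
            have hsub2 : insert u (Finset.image g Finset.univ) ⊆ D ∩ SF := by
              intro y hy
              rcases mem_insert.mp hy with rfl | hy
              · exact mem_inter.mpr ⟨huD, by simp [hSF]⟩
              · exact hgsub hy
            have := Finset.card_le_card hsub2
            rwa [Finset.card_insert_of_notMem hung, hgcard] at this
          have hD'card : D'.card ≤ (D \ SF).card + 1 := by
            rw [hD', if_pos huD]
            exact Finset.card_insert_le _ _
          omega
        · have hc : t ≤ (D ∩ SF).card := by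
            have := Finset.card_le_card hgsub
            rwa [hgcard] at this
          have hD'card : D'.card ≤ (D \ SF).card := by
            rw [hD', if_neg huD]
          omega
end

section
/- Let T be a tree in the family F (built from P_4 by operations O1 and O2 as described). Then LV(T) is the unique minimum restrained dominating set of T, and moreover LV(T) is the unique maximum packing of T; in particular γ_r(T) = ρ(T) = |LV(T)|. -/
open SimpleGraph Finset

structure FInv (G : SimpleGraph ℕ) (vs lv : Finset ℕ) : Prop where
  lv_sub : lv ⊆ vs
  edge_mem : ∀ ⦃a b : ℕ⦄, G.Adj a b → a ∈ vs ∧ b ∈ vs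
  conn : ∀ a ∈ vs, ∀ b ∈ vs, G.Reachable a b
  rds : IsRDSOn G vs lv
  pack : ∀ a ∈ lv, ∀ b ∈ lv, a ≠ b → ¬G.Adj a b ∧ ∀ z, ¬(G.Adj a z ∧ G.Adj z b)
  good : ∃ (ord : ℕ → ℕ) (B : ℕ), ∀ p ∈ lv, ord p ≤ B ∧
    ((∃ y, ∀ z, G.Adj p z ↔ z = y) ∨
     ∃ (n : ℕ) (u : ℕ) (m tp : Fin n → ℕ), 0 < n ∧ u ∉ lv ∧
       (∀ z, G.Adj u z ↔ z = p ∨ ∃ i, z = m i) ∧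
       ∀ i, m i ∉ lv ∧ tp i ∈ lv ∧ ord p < ord (tp i) ∧
         ∀ z, G.Adj (m i) z ↔ z = u ∨ z = tp i)

def PackUniq (G : SimpleGraph ℕ) (vs lv : Finset ℕ) : Prop :=
  ∀ P : Finset ℕ, P ⊆ vs → (∀ a ∈ P, ∀ b ∈ P, a ≠ b → 3 ≤ G.dist a b) →
    P.card ≤ lv.card ∧ (P.card = lv.card → P = lv)

lemma adj3 {G : SimpleGraph ℕ} {a b : ℕ} (h : 3 ≤ G.dist a b) : ¬ G.Adj a b := by
  intro had
  have := G.dist_le (SimpleGraph.Walk.cons had SimpleGraph.Walk.nil)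
  simp at this; omega

lemma com3 {G : SimpleGraph ℕ} {a b z : ℕ} (h : 3 ≤ G.dist a b)
    (h1 : G.Adj a z) (h2 : G.Adj z b) : False := by
  have := G.dist_le (SimpleGraph.Walk.cons h1 (SimpleGraph.Walk.cons h2 SimpleGraph.Walk.nil))
  simp at this; omega


lemma three_le_dist {G : SimpleGraph ℕ} {a b : ℕ} (hr : G.Reachable a b) (hne : a ≠ b)
    (hnadj : ¬ G.Adj a b) (hcom : ∀ z, ¬(G.Adj a z ∧ G.Adj z b)) : 3 ≤ G.dist a b := by
  by_contra hcon
  push_neg at hcon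
  obtain ⟨p, hp⟩ := hr.exists_walk_length_eq_dist
  rw [← hp] at hcon
  match p, hcon with
  | .nil, _ => exact hne rfl
  | .cons h1 .nil, _ => exact hnadj h1
  | .cons h1 (.cons h2 .nil), _ => exact hcom _ ⟨h1, h2⟩
  | .cons _ (.cons _ (.cons _ q)), hcon => simp [SimpleGraph.Walk.length_cons] at hcon; omega

lemma sup3_adj (G : SimpleGraph ℕ) (x u v w p q : ℕ) :
    (G ⊔ SimpleGraph.fromEdgeSet {s(x,u), s(u,v), s(v,w)}).Adj p q ↔
      G.Adj p q ∨ (p ≠ q ∧ ((p = x ∧ q = u) ∨ (p = u ∧ q = x) ∨ (p = u ∧ q = v) ∨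
        (p = v ∧ q = u) ∨ (p = v ∧ q = w) ∨ (p = w ∧ q = v))) := by
  simp [SimpleGraph.sup_adj, SimpleGraph.fromEdgeSet_adj, Sym2.eq_iff, Set.mem_insert_iff,
    Set.mem_singleton_iff]
  tauto

lemma packing_card_le {G : SimpleGraph ℕ} {vs D P : Finset ℕ}
    (hdom : ∀ v ∈ vs, v ∉ D → ∃ u ∈ D, G.Adj v u)
    (hP : P ⊆ vs)
    (hpack : ∀ a ∈ P, ∀ b ∈ P, a ≠ b → ¬G.Adj a b ∧ ∀ z, ¬(G.Adj a z ∧ G.Adj z b)) :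
    P.card ≤ D.card := by
  classical
  set f : ℕ → ℕ := fun p => if p ∈ D then p else
    (if h : ∃ q ∈ D, G.Adj p q then h.choose else 0) with hf
  have hfP : ∀ p ∈ P, f p ∈ D ∧ (f p = p ∨ G.Adj p (f p)) := by
    intro p hp
    by_cases hpD : p ∈ D
    · simp [hf, hpD]
    · have hex : ∃ q ∈ D, G.Adj p q := hdom p (hP hp) hpD
      have hspec := hex.choose_spec
      simp only [hf, hpD, if_false, dif_pos hex]
      exact ⟨hspec.1, Or.inr hspec.2⟩
  apply Finset.card_le_card_of_injOn f (fun p hp => (hfP p hp).1)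
  intro p hp q hq hfe
  simp only [Finset.mem_coe] at hp hq
  by_contra hne
  rcases (hfP p hp).2 with h1 | h1 <;> rcases (hfP q hq).2 with h2 | h2
  · exact hne (h1 ▸ h2 ▸ hfe)
  · exact (hpack q hq p hp (Ne.symm hne)).1 (by rw [← hfe, h1] at h2; exact h2)
  · exact (hpack p hp q hq hne).1 (by rw [hfe, h2] at h1; exact h1)
  · exact (hpack p hp q hq hne).2 (f p) ⟨h1, by rw [hfe]; exact h2.symm⟩

lemma rds_unique {G : SimpleGraph ℕ} {vs lv : Finset ℕ} (hI : FInv G vs lv)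
    {D : Finset ℕ} (hD : IsRDSOn G vs D) :
    lv.card ≤ D.card ∧ (D.card = lv.card → D = lv) := by
  classical
  have hdom : ∀ v ∈ vs, v ∉ D → ∃ u ∈ D, G.Adj v u := fun v hv hvD => (hD.2 v hv hvD).1
  refine ⟨packing_card_le hdom hI.lv_sub hI.pack, ?_⟩
  intro hcard
  set f : ℕ → ℕ := fun p => if p ∈ D then p else
    (if h : ∃ q ∈ D, G.Adj p q then h.choose else 0) with hf
  have hfP : ∀ p ∈ lv, f p ∈ D ∧ (f p = p ∨ G.Adj p (f p)) := by
    intro p hp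
    by_cases hpD : p ∈ D
    · simp [hf, hpD]
    · have hex : ∃ q ∈ D, G.Adj p q := hdom p (hI.lv_sub hp) hpD
      have hspec := hex.choose_spec
      simp only [hf, hpD, if_false, dif_pos hex]
      exact ⟨hspec.1, Or.inr hspec.2⟩
  have hK2 : ∀ p ∈ D, f p = p := fun p hp => by simp [hf, hp]
  have hinj : ∀ p ∈ lv, ∀ q ∈ lv, f p = f q → p = q := by
    intro p hp q hq hfe
    by_contra hne
    rcases (hfP p hp).2 with h1 | h1 <;> rcases (hfP q hq).2 with h2 | h2
    · exact hne (h1 ▸ h2 ▸ hfe)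
    · exact (hI.pack q hq p hp (Ne.symm hne)).1 (by rw [← hfe, h1] at h2; exact h2)
    · exact (hI.pack p hp q hq hne).1 (by rw [hfe, h2] at h1; exact h1)
    · exact (hI.pack p hp q hq hne).2 (f p) ⟨h1, by rw [hfe]; exact h2.symm⟩
  have himage : lv.image f = D := by
    apply Finset.eq_of_subset_of_card_le
    · intro z hz
      obtain ⟨p, hp, rfl⟩ := Finset.mem_image.mp hz
      exact (hfP p hp).1
    · rw [hcard, Finset.card_image_of_injOn (fun p hp q hq => hinj p hp q hq)]
  have hK3 : ∀ q ∈ lv, q ∈ D → ∀ z, G.Adj q z → z ∉ D := by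
    intro q hq hqD z hadj hzD
    have hzim : z ∈ lv.image f := himage ▸ hzD
    obtain ⟨r, hr, hrz⟩ := Finset.mem_image.mp hzim
    have hqz : q ≠ z := G.ne_of_adj hadj
    rcases (hfP r hr).2 with h | h
    · have hzr : z = r := by rw [← hrz, h]
      exact (hI.pack q hq z (hzr ▸ hr) hqz).1 hadj
    · have hadj2 : G.Adj r z := hrz ▸ h
      by_cases hqr : q = r
      · apply hqz
        have := hK2 q hqD
        rw [hqr] at this
        rw [← hrz, this, hqr]
      · exact (hI.pack q hq r hr hqr).2 z ⟨hadj, hadj2.symm⟩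
  obtain ⟨ord, B, hgood⟩ := hI.good
  have main : ∀ k, ∀ p ∈ lv, B < ord p + k → p ∈ D := by
    intro k
    induction k with
    | zero => intro p hp hlt; exact absurd (hgood p hp).1 (by omega)
    | succ k ih =>
      intro p hp hlt
      by_contra hpD
      rcases (hgood p hp).2 with ⟨y, hy⟩ | ⟨n, u, m, tp, hn, huLv, huAdj, hm⟩
      · obtain ⟨⟨q, hqD, hqa⟩, q', hq'vs, hq'D, hq'a⟩ := hD.2 p (hI.lv_sub hp) hpD
        have h1 : q = y := (hy q).mp hqa
        have h2 : q' = y := (hy q').mp hq'a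
        rw [h1] at hqD; rw [h2] at hq'D; exact hq'D hqD
      · have hmD : ∀ i, m i ∉ D := by
          intro i
          obtain ⟨hmLv, htpLv, hord, hmAdj⟩ := hm i
          have htpD : tp i ∈ D := ih (tp i) htpLv (by omega)
          have hadjt : G.Adj (tp i) (m i) := ((hmAdj (tp i)).mpr (Or.inr rfl)).symm
          exact hK3 (tp i) htpLv htpD (m i) hadjt
        have i0 : Fin n := ⟨0, hn⟩
        obtain ⟨hm0Lv, htp0Lv, hord0, hm0Adj⟩ := hm i0
        have hadj_mu : G.Adj (m i0) u := (hm0Adj u).mpr (Or.inl rfl)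
        have hm0vs : m i0 ∈ vs := (hI.edge_mem hadj_mu).1
        obtain ⟨_, y, hyvs, hyD, hya⟩ := hD.2 (m i0) hm0vs (hmD i0)
        have hyu : y = u := by
          rcases (hm0Adj y).mp hya with h | h
          · exact h
          · exfalso; apply hyD; rw [h]; exact ih (tp i0) htp0Lv (by omega)
        rw [hyu] at hyD
        have hadj_up : G.Adj u p := (huAdj p).mpr (Or.inl rfl)
        have huvs : u ∈ vs := (hI.edge_mem hadj_up).1
        obtain ⟨⟨q, hqD, hqa⟩, -⟩ := hD.2 u huvs hyD
        rcases (huAdj q).mp hqa with h | ⟨i, hi⟩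
        · rw [h] at hqD; exact hpD hqD
        · rw [hi] at hqD; exact hmD i hqD
  have hsub : lv ⊆ D := fun p hp => main (B + 1) p hp (by omega)
  exact (Finset.eq_of_subset_of_card_le hsub (by omega)).symm

lemma base_adj (a b c d p q : ℕ) :
    (SimpleGraph.fromEdgeSet {s(a,b), s(b,c), s(c,d)}).Adj p q ↔
      p ≠ q ∧ ((p = a ∧ q = b) ∨ (p = b ∧ q = a) ∨ (p = b ∧ q = c) ∨ (p = c ∧ q = b) ∨
        (p = c ∧ q = d) ∨ (p = d ∧ q = c)) := by
  simp [SimpleGraph.fromEdgeSet_adj, Sym2.eq_iff, Set.mem_insert_iff, Set.mem_singleton_iff]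
  tauto

lemma base_case (a b c d : ℕ) (hab : a ≠ b) (hac : a ≠ c) (had : a ≠ d) (hbc : b ≠ c)
    (hbd : b ≠ d) (hcd : c ≠ d) :
    FInv (SimpleGraph.fromEdgeSet {s(a, b), s(b, c), s(c, d)}) {a, b, c, d} {a, d} ∧
    PackUniq (SimpleGraph.fromEdgeSet {s(a, b), s(b, c), s(c, d)}) {a, b, c, d} {a, d} := by
  set G := SimpleGraph.fromEdgeSet {s(a, b), s(b, c), s(c, d)} with hG
  have hA : ∀ p q, G.Adj p q ↔ p ≠ q ∧ ((p = a ∧ q = b) ∨ (p = b ∧ q = a) ∨ (p = b ∧ q = c) ∨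
      (p = c ∧ q = b) ∨ (p = c ∧ q = d) ∨ (p = d ∧ q = c)) := base_adj a b c d
  have hadj_ab : G.Adj a b := by rw [hA]; omega
  have hadj_bc : G.Adj b c := by rw [hA]; omega
  have hadj_cd : G.Adj c d := by rw [hA]; omega
  have hlvcard : ({a, d} : Finset ℕ).card = 2 := by
    rw [Finset.card_insert_of_notMem (by simp [had]), Finset.card_singleton]
  have hI : FInv G {a, b, c, d} {a, d} := by
    constructor
    · intro z hz; simp only [Finset.mem_insert, Finset.mem_singleton] at hz ⊢; omega
    · intro p q h; rw [hA] at h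
      simp only [Finset.mem_insert, Finset.mem_singleton]; omega
    · have ra : ∀ z ∈ ({a, b, c, d} : Finset ℕ), G.Reachable a z := by
        intro z hz
        simp only [Finset.mem_insert, Finset.mem_singleton] at hz
        rcases hz with rfl | rfl | rfl | rfl
        · exact SimpleGraph.Reachable.refl _
        · exact hadj_ab.reachable
        · exact hadj_ab.reachable.trans hadj_bc.reachable
        · exact (hadj_ab.reachable.trans hadj_bc.reachable).trans hadj_cd.reachable
      exact fun p hp q hq => ((ra p hp).symm).trans (ra q hq)
    · constructor
      · intro z hz; simp only [Finset.mem_insert, Finset.mem_singleton] at hz ⊢; omega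
      · intro v hv hvD
        simp only [Finset.mem_insert, Finset.mem_singleton] at hv hvD
        have hv' : v = b ∨ v = c := by omega
        rcases hv' with rfl | rfl
        · exact ⟨⟨a, by simp, hadj_ab.symm⟩,
            ⟨c, by simp, by simp only [Finset.mem_insert, Finset.mem_singleton]; omega, hadj_bc⟩⟩
        · exact ⟨⟨d, by simp, hadj_cd⟩,
            ⟨b, by simp, by simp only [Finset.mem_insert, Finset.mem_singleton]; omega, hadj_bc.symm⟩⟩
    · intro p hp q hq hne
      simp only [Finset.mem_insert, Finset.mem_singleton] at hp hq
      constructor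
      · rw [hA]; omega
      · intro z hz; rw [hA, hA] at hz; omega
    · refine ⟨fun _ => 0, 0, ?_⟩
      intro p hp
      simp only [Finset.mem_insert, Finset.mem_singleton] at hp
      refine ⟨le_refl 0, Or.inl ?_⟩
      rcases hp with rfl | rfl
      · exact ⟨b, fun z => by rw [hA]; omega⟩
      · exact ⟨c, fun z => by rw [hA]; omega⟩
  refine ⟨hI, ?_⟩
  intro P hPvs hPd
  have hle : P.card ≤ ({a, d} : Finset ℕ).card := by
    apply packing_card_le (fun z hz hzD => (hI.rds.2 z hz hzD).1) hPvs
    exact fun p hp q hq hne => ⟨adj3 (hPd p hp q hq hne),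
      fun z hz => com3 (hPd p hp q hq hne) hz.1 hz.2⟩
  refine ⟨hle, ?_⟩
  intro hPcard
  rw [hlvcard] at hPcard
  have hother : ∀ p ∈ P, ∃ q ∈ P, q ≠ p := by
    intro p hp
    have h1 : (P.erase p).card = 1 := by rw [Finset.card_erase_of_mem hp, hPcard]
    obtain ⟨q, hq⟩ := Finset.card_pos.mp (by omega : 0 < (P.erase p).card)
    exact ⟨q, Finset.mem_of_mem_erase hq, Finset.ne_of_mem_erase hq⟩
  have hsub : P ⊆ ({a, d} : Finset ℕ) := by
    intro p hp
    have hp4 := hPvs hp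
    simp only [Finset.mem_insert, Finset.mem_singleton] at hp4 ⊢
    by_contra hpn
    push_neg at hpn
    obtain ⟨q, hq, hqp⟩ := hother p hp
    have hq4 := hPvs hq
    simp only [Finset.mem_insert, Finset.mem_singleton] at hq4
    have hd3 := hPd p hp q hq (Ne.symm hqp)
    have hpbc : p = b ∨ p = c := by omega
    rcases hpbc with rfl | rfl
    · rcases hq4 with rfl | rfl | rfl | rfl
      · exact adj3 hd3 hadj_ab.symm
      · exact absurd rfl hqp
      · exact adj3 hd3 hadj_bc
      · exact com3 hd3 hadj_bc hadj_cd
    · rcases hq4 with rfl | rfl | rfl | rfl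
      · exact com3 hd3 hadj_bc.symm hadj_ab.symm
      · exact adj3 hd3 hadj_bc.symm
      · exact absurd rfl hqp
      · exact adj3 hd3 hadj_cd
  exact Finset.eq_of_subset_of_card_le hsub (by omega)

set_option maxHeartbeats 1000000 in
lemma o1_case (G : SimpleGraph ℕ) (vs lv : Finset ℕ) (x u v w : ℕ)
    (hx : x ∈ lv) (hu : u ∉ vs) (hv : v ∉ vs) (hw : w ∉ vs)
    (huv : u ≠ v) (huw : u ≠ w) (hvw : v ≠ w)
    (hI : FInv G vs lv) (hPU : PackUniq G vs lv) :
    FInv (G ⊔ SimpleGraph.fromEdgeSet {s(x, u), s(u, v), s(v, w)}) (vs ∪ {u, v, w}) (lv ∪ {w}) ∧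
    PackUniq (G ⊔ SimpleGraph.fromEdgeSet {s(x, u), s(u, v), s(v, w)}) (vs ∪ {u, v, w})
      (lv ∪ {w}) := by
  classical
  set G' := G ⊔ SimpleGraph.fromEdgeSet {s(x, u), s(u, v), s(v, w)} with hG'def
  have hA : ∀ p q, G'.Adj p q ↔ G.Adj p q ∨ (p ≠ q ∧ ((p = x ∧ q = u) ∨ (p = u ∧ q = x) ∨
      (p = u ∧ q = v) ∨ (p = v ∧ q = u) ∨ (p = v ∧ q = w) ∨ (p = w ∧ q = v))) :=
    sup3_adj G x u v w
  have hxvs : x ∈ vs := hI.lv_sub hx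
  have hxu : x ≠ u := fun h => hu (h ▸ hxvs)
  have hxv : x ≠ v := fun h => hv (h ▸ hxvs)
  have hxw : x ≠ w := fun h => hw (h ▸ hxvs)
  have hne_u : ∀ y ∈ vs, y ≠ u := fun y hy e => hu (e ▸ hy)
  have hne_v : ∀ y ∈ vs, y ≠ v := fun y hy e => hv (e ▸ hy)
  have hne_w : ∀ y ∈ vs, y ≠ w := fun y hy e => hw (e ▸ hy)
  have hGnotu : ∀ z, ¬ G.Adj u z := fun z h => hu (hI.edge_mem h).1
  have hGnotv : ∀ z, ¬ G.Adj v z := fun z h => hv (hI.edge_mem h).1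
  have hGnotw : ∀ z, ¬ G.Adj w z := fun z h => hw (hI.edge_mem h).1
  have hG'u : ∀ z, G'.Adj u z ↔ z = x ∨ z = v := by
    intro z; rw [hA]
    constructor
    · rintro (h | ⟨hne, h⟩)
      · exact absurd h (hGnotu z)
      · omega
    · intro h; right; omega
  have hG'v : ∀ z, G'.Adj v z ↔ z = u ∨ z = w := by
    intro z; rw [hA]
    constructor
    · rintro (h | ⟨hne, h⟩)
      · exact absurd h (hGnotv z)
      · omega
    · intro h; right; omega
  have hG'w : ∀ z, G'.Adj w z ↔ z = v := by
    intro z; rw [hA]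
    constructor
    · rintro (h | ⟨hne, h⟩)
      · exact absurd h (hGnotw z)
      · omega
    · intro h; right; omega
  have hG'old : ∀ p z, p ∈ vs → p ≠ x → (G'.Adj p z ↔ G.Adj p z) := by
    intro p z hp hpx
    rw [hA]
    constructor
    · rintro (h | ⟨hne, h⟩)
      · exact h
      · exfalso
        have h1 := hne_u p hp; have h2 := hne_v p hp; have h3 := hne_w p hp
        omega
    · exact Or.inl
  have hG'x : ∀ z, G'.Adj x z ↔ G.Adj x z ∨ z = u := by
    intro z
    rw [hA]
    constructor
    · rintro (h | ⟨hne, h⟩)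
      · exact Or.inl h
      · right; omega
    · rintro (h | rfl)
      · exact Or.inl h
      · right; exact ⟨hxu, by omega⟩
  have hadj_xu : G'.Adj x u := (hG'x u).mpr (Or.inr rfl)
  have hlift : ∀ a b, G.Adj a b → G'.Adj a b := fun a b h => (hA a b).mpr (Or.inl h)
  have hadj_uv : G'.Adj u v := (hG'u v).mpr (Or.inr rfl)
  have hadj_vw : G'.Adj v w := (hG'v w).mpr (Or.inr rfl)
  have hmem_vs' : ∀ z, z ∈ vs ∪ {u, v, w} ↔ z ∈ vs ∨ z = u ∨ z = v ∨ z = w := by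
    intro z
    simp only [Finset.mem_union, Finset.mem_insert, Finset.mem_singleton]
  have hmem_lv' : ∀ z, z ∈ lv ∪ {w} ↔ z ∈ lv ∨ z = w := by
    intro z; simp only [Finset.mem_union, Finset.mem_singleton]
  have hwlv : w ∉ lv := fun h => hw (hI.lv_sub h)
  have hulv' : u ∉ lv ∪ {w} := by
    rw [hmem_lv']; rintro (h | rfl)
    · exact hu (hI.lv_sub h)
    · exact huw rfl
  have hvlv' : v ∉ lv ∪ {w} := by
    rw [hmem_lv']; rintro (h | rfl)
    · exact hv (hI.lv_sub h)
    · exact hvw rfl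
  have hI' : FInv G' (vs ∪ {u, v, w}) (lv ∪ {w}) := by
    constructor
    · intro z hz
      rw [hmem_lv'] at hz; rw [hmem_vs']
      rcases hz with h | rfl
      · exact Or.inl (hI.lv_sub h)
      · tauto
    · intro p q h
      rw [hA] at h
      rw [hmem_vs', hmem_vs']
      rcases h with h | ⟨hne, h⟩
      · exact ⟨Or.inl (hI.edge_mem h).1, Or.inl (hI.edge_mem h).2⟩
      · rcases h with ⟨rfl,rfl⟩|⟨rfl,rfl⟩|⟨rfl,rfl⟩|⟨rfl,rfl⟩|⟨rfl,rfl⟩|⟨rfl,rfl⟩ <;> tauto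
    · have hrx : ∀ z ∈ vs ∪ {u, v, w}, G'.Reachable z x := by
        intro z hz
        rw [hmem_vs'] at hz
        rcases hz with h | rfl | rfl | rfl
        · exact (hI.conn z h x hxvs).mono le_sup_left
        · exact hadj_xu.symm.reachable
        · exact (hadj_uv.symm.reachable).trans hadj_xu.symm.reachable
        · exact ((hadj_vw.symm.reachable).trans hadj_uv.symm.reachable).trans
            hadj_xu.symm.reachable
      exact fun p hp q hq => (hrx p hp).trans (hrx q hq).symm
    · constructor
      · intro z hz
        rw [hmem_lv'] at hz; rw [hmem_vs']
        rcases hz with h | rfl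
        · exact Or.inl (hI.lv_sub h)
        · tauto
      · intro z hz hzD
        rw [hmem_vs'] at hz
        rw [hmem_lv'] at hzD
        push_neg at hzD
        rcases hz with h | rfl | rfl | rfl
        · have hzlv : z ∉ lv := hzD.1
          obtain ⟨⟨q, hq, hqa⟩, q', hq'vs, hq'lv, hq'a⟩ := hI.rds.2 z h hzlv
          refine ⟨⟨q, by rw [hmem_lv']; exact Or.inl hq, hlift _ _ hqa⟩,
            ⟨q', by rw [hmem_vs']; exact Or.inl hq'vs, ?_, hlift _ _ hq'a⟩⟩
          rw [hmem_lv']; rintro (hh | rfl)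
          · exact hq'lv hh
          · exact hw hq'vs
        · exact ⟨⟨x, by rw [hmem_lv']; exact Or.inl hx, (hG'u x).mpr (Or.inl rfl)⟩,
            ⟨v, by rw [hmem_vs']; tauto, hvlv', (hG'u v).mpr (Or.inr rfl)⟩⟩
        · exact ⟨⟨w, by rw [hmem_lv']; exact Or.inr rfl, (hG'v w).mpr (Or.inr rfl)⟩,
            ⟨u, by rw [hmem_vs']; tauto, hulv', (hG'v u).mpr (Or.inl rfl)⟩⟩
        · exact absurd rfl hzD.2
    · intro p hp q hq hne
      rw [hmem_lv'] at hp hq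
      have hbw : ∀ p', p' ∈ lv → ¬G'.Adj p' w ∧ ∀ z, ¬(G'.Adj p' z ∧ G'.Adj z w) := by
        intro p' hp'
        have hpvs := hI.lv_sub hp'
        have h1 := hne_u p' hpvs; have h2 := hne_v p' hpvs; have h3 := hne_w p' hpvs
        constructor
        · rw [hA]
          rintro (h | ⟨hne', h⟩)
          · exact hw (hI.edge_mem h).2
          · omega
        · rintro z ⟨ha1, ha2⟩
          have hzv : z = v := ((hG'w z).mp ha2.symm)
          rw [hzv] at ha1
          by_cases hpx : p' = x
          · rw [hpx, hG'x v] at ha1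
            rcases ha1 with h | h
            · exact hv (hI.edge_mem h).2
            · exact huv h.symm
          · rw [hG'old p' v hpvs hpx] at ha1
            exact hGnotv _ ha1.symm
      rcases hp with hp | hp <;> rcases hq with hq | hq
      · have hpvs := hI.lv_sub hp; have hqvs := hI.lv_sub hq
        have h1 := hne_u p hpvs; have h2 := hne_v p hpvs; have h3 := hne_w p hpvs
        have h4 := hne_u q hqvs; have h5 := hne_v q hqvs; have h6 := hne_w q hqvs
        constructor
        · rw [hA]
          rintro (h | ⟨hne', h⟩)
          · exact (hI.pack p hp q hq hne).1 h
          · omega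
        · rintro z ⟨ha1, ha2⟩
          rw [hA] at ha1 ha2
          rcases ha1 with ha1 | ⟨hne1, ha1⟩ <;> rcases ha2 with ha2 | ⟨hne2, ha2⟩
          · exact (hI.pack p hp q hq hne).2 z ⟨ha1, ha2⟩
          · have hzvs : z ∈ vs := (hI.edge_mem ha1).2
            have h7 := hne_u z hzvs; have h8 := hne_v z hzvs; have h9 := hne_w z hzvs
            omega
          · have hzvs : z ∈ vs := (hI.edge_mem ha2).1
            have h7 := hne_u z hzvs; have h8 := hne_v z hzvs; have h9 := hne_w z hzvs
            omega
          · omega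
      · rw [hq]; exact hbw p hp
      · rw [hp]
        have hres := hbw q hq
        constructor
        · exact fun h => hres.1 h.symm
        · rintro z ⟨ha1, ha2⟩
          exact hres.2 z ⟨ha2.symm, ha1.symm⟩
      · exact absurd (hp.trans hq.symm) hne
    · obtain ⟨ord, B, hgood⟩ := hI.good
      refine ⟨fun z => if z ∈ vs then ord z else B + 1, B + 1, ?_⟩
      intro p hp
      rw [hmem_lv'] at hp
      rcases hp with hp | hp
      swap
      · rw [hp]
        constructor
        · simp only [if_neg hw]
          exact le_refl _
        · exact Or.inl ⟨v, hG'w⟩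
      · have hpvs := hI.lv_sub hp
        constructor
        · simp only [if_pos hpvs]
          exact le_trans (hgood p hp).1 (Nat.le_succ B)
        · by_cases hpx : p = x
          · subst hpx
            right
            refine ⟨1, u, fun _ => v, fun _ => w, Nat.one_pos, hulv', ?_, ?_⟩
            · intro z
              rw [hG'u z]
              constructor
              · rintro (h | h)
                · exact Or.inl h
                · exact Or.inr ⟨⟨0, Nat.one_pos⟩, h⟩
              · rintro (h | ⟨i, h⟩)
                · exact Or.inl h
                · exact Or.inr h
            · intro i
              refine ⟨hvlv', by rw [hmem_lv']; exact Or.inr rfl, ?_, hG'v⟩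
              have hxB := (hgood p hx).1
              simp only [if_pos hxvs, if_neg hw]
              omega
          · rcases (hgood p hp).2 with ⟨y, hy⟩ | ⟨n, u0, m, tp, hn, hu0lv, hu0adj, hmprop⟩
            · left
              exact ⟨y, fun z => by rw [hG'old p z hpvs hpx, hy z]⟩
            · right
              have hu0adjp : G.Adj u0 p := (hu0adj p).mpr (Or.inl rfl)
              have hu0vs : u0 ∈ vs := (hI.edge_mem hu0adjp).1
              have hu0x : u0 ≠ x := fun e => hu0lv (e ▸ hx)
              refine ⟨n, u0, m, tp, hn, ?_, ?_, ?_⟩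
              · rw [hmem_lv']; rintro (h | rfl)
                · exact hu0lv h
                · exact hw hu0vs
              · intro z; rw [hG'old u0 z hu0vs hu0x, hu0adj z]
              · intro i
                obtain ⟨hmlv, htplv, hord, hmadj⟩ := hmprop i
                have hmadju : G.Adj (m i) u0 := (hmadj u0).mpr (Or.inl rfl)
                have hmvs : m i ∈ vs := (hI.edge_mem hmadju).1
                have hmx : m i ≠ x := fun e => hmlv (e ▸ hx)
                have htpvs : tp i ∈ vs := hI.lv_sub htplv
                refine ⟨?_, by rw [hmem_lv']; exact Or.inl htplv, ?_, ?_⟩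
                · rw [hmem_lv']; rintro (h | rfl)
                  · exact hmlv h
                  · exact hw hmvs
                · simp only [if_pos hpvs, if_pos htpvs]; exact hord
                · intro z; rw [hG'old (m i) z hmvs hmx, hmadj z]
  refine ⟨hI', ?_⟩
  intro P hPvs hPd
  have hdom' : ∀ z ∈ vs ∪ {u, v, w}, z ∉ lv ∪ {w} → ∃ y ∈ lv ∪ {w}, G'.Adj z y :=
    fun z hz hzD => (hI'.rds.2 z hz hzD).1
  have hle : P.card ≤ (lv ∪ {w}).card := by
    apply packing_card_le hdom' hPvs
    exact fun a ha b hb hne => ⟨adj3 (hPd a ha b hb hne),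
      fun z hz => com3 (hPd a ha b hb hne) hz.1 hz.2⟩
  refine ⟨hle, ?_⟩
  intro hPcard
  have hlv'card : (lv ∪ {w}).card = lv.card + 1 := by
    rw [Finset.card_union_of_disjoint (by simp [hwlv]), Finset.card_singleton]
  set Q := P ∩ vs with hQdef
  set R := P \ vs with hRdef
  have hsplit : Q.card + R.card = P.card := Finset.card_inter_add_card_sdiff P vs
  have hQsub : Q ⊆ vs := Finset.inter_subset_right
  have hQP : Q ⊆ P := Finset.inter_subset_left
  have hRP : R ⊆ P := Finset.sdiff_subset
  have hQpack : ∀ a ∈ Q, ∀ b ∈ Q, a ≠ b → 3 ≤ G.dist a b := by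
    intro a ha b hb hne
    have haP := hQP ha; have hbP := hQP hb
    have h3 := hPd a haP b hbP hne
    refine three_le_dist (hI.conn a (hQsub ha) b (hQsub hb)) hne ?_ ?_
    · exact fun hadj => adj3 h3 (hlift _ _ hadj)
    · exact fun z hz => com3 h3 (hlift _ _ hz.1)
        (hlift _ _ hz.2)
  have hQle : Q.card ≤ lv.card := (hPU Q hQsub hQpack).1
  have hRsub : ∀ r ∈ R, r = u ∨ r = v ∨ r = w := by
    intro r hr
    have := hPvs (hRP hr)
    rw [hmem_vs'] at this
    have := Finset.mem_sdiff.mp hr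
    tauto
  have hR1 : R.card ≤ 1 := by
    rw [Finset.card_le_one]
    intro r1 h1 r2 h2
    by_contra hne
    have hd3 := hPd r1 (hRP h1) r2 (hRP h2) hne
    rcases hRsub r1 h1 with rfl | rfl | rfl <;> rcases hRsub r2 h2 with rfl | rfl | rfl
    · exact hne rfl
    · exact adj3 hd3 hadj_uv
    · exact com3 hd3 hadj_uv hadj_vw
    · exact adj3 hd3 hadj_uv.symm
    · exact hne rfl
    · exact adj3 hd3 hadj_vw
    · exact com3 hd3 hadj_vw.symm hadj_uv.symm
    · exact adj3 hd3 hadj_vw.symm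
    · exact hne rfl
  have hQcard : Q.card = lv.card ∧ R.card = 1 := by
    rw [hlv'card] at hPcard; omega
  have hQlv : Q = lv := (hPU Q hQsub hQpack).2 hQcard.1
  have hxP : x ∈ P := hQP (hQlv ▸ hx)
  obtain ⟨r, hr⟩ := Finset.card_eq_one.mp hQcard.2
  have hrR : r ∈ R := hr ▸ Finset.mem_singleton_self r
  have hrP : r ∈ P := hRP hrR
  rcases hRsub r hrR with hrw | hrw | hrw
  · rw [hrw] at hrP
    exact absurd ((hG'u x).mpr (Or.inl rfl)) (adj3 (hPd u hrP x hxP hxu.symm))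
  · rw [hrw] at hrP
    exact (com3 (hPd v hrP x hxP hxv.symm) ((hG'v u).mpr (Or.inl rfl)) hadj_xu.symm).elim
  · rw [hrw] at hr
    have hPQ : P = Q ∪ R := by rw [hQdef, hRdef, Finset.union_comm, Finset.sdiff_union_inter]
    rw [hPQ, hQlv, hr]

lemma spider_adj (G : SimpleGraph ℕ) (x t : ℕ) (u : ℕ) (mid lf : Fin t → ℕ) (p q : ℕ) :
    (G ⊔ SimpleGraph.fromEdgeSet
        (({s(x, u)} : Set (Sym2 ℕ)) ∪ ⋃ i : Fin t, {s(u, mid i), s(mid i, lf i)})).Adj p q ↔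
      G.Adj p q ∨ (p ≠ q ∧ ((p = x ∧ q = u) ∨ (p = u ∧ q = x) ∨
        ∃ i, (p = u ∧ q = mid i) ∨ (p = mid i ∧ q = u) ∨
          (p = mid i ∧ q = lf i) ∨ (p = lf i ∧ q = mid i))) := by
  simp [SimpleGraph.sup_adj, SimpleGraph.fromEdgeSet_adj, Sym2.eq_iff, Set.mem_insert_iff,
    Set.mem_singleton_iff, Set.mem_union, Set.mem_iUnion]
  aesop

set_option maxHeartbeats 1600000 in
lemma o2_case (G : SimpleGraph ℕ) (vs lv : Finset ℕ) (x : ℕ) (t : ℕ) (u : ℕ)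
    (mid lf : Fin t → ℕ) (ht : 1 ≤ t) (hx : x ∈ lv)
    (hu : u ∉ vs) (hmid : ∀ i, mid i ∉ vs) (hlf : ∀ i, lf i ∉ vs)
    (hinj : Function.Injective
      (fun p : Fin t ⊕ Fin t ⊕ Unit => Sum.elim mid (Sum.elim lf fun _ => u) p))
    (hI : FInv G vs lv) (hPU : PackUniq G vs lv) :
    FInv (G ⊔ SimpleGraph.fromEdgeSet
        (({s(x, u)} : Set (Sym2 ℕ)) ∪ ⋃ i : Fin t, {s(u, mid i), s(mid i, lf i)}))
      (vs ∪ ({u} ∪ Finset.image mid Finset.univ ∪ Finset.image lf Finset.univ))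
      (lv ∪ Finset.image lf Finset.univ) ∧
    PackUniq (G ⊔ SimpleGraph.fromEdgeSet
        (({s(x, u)} : Set (Sym2 ℕ)) ∪ ⋃ i : Fin t, {s(u, mid i), s(mid i, lf i)}))
      (vs ∪ ({u} ∪ Finset.image mid Finset.univ ∪ Finset.image lf Finset.univ))
      (lv ∪ Finset.image lf Finset.univ) := by
  classical
  set G' := G ⊔ SimpleGraph.fromEdgeSet
      (({s(x, u)} : Set (Sym2 ℕ)) ∪ ⋃ i : Fin t, {s(u, mid i), s(mid i, lf i)}) with hG'def
  set vs' := vs ∪ ({u} ∪ Finset.image mid Finset.univ ∪ Finset.image lf Finset.univ) with hvs'def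
  set lv' := lv ∪ Finset.image lf Finset.univ with hlv'def
  have hA : ∀ p q, G'.Adj p q ↔ G.Adj p q ∨ (p ≠ q ∧ ((p = x ∧ q = u) ∨ (p = u ∧ q = x) ∨
      ∃ i, (p = u ∧ q = mid i) ∨ (p = mid i ∧ q = u) ∨
        (p = mid i ∧ q = lf i) ∨ (p = lf i ∧ q = mid i))) := spider_adj G x t u mid lf
  have hmidinj : ∀ i j, mid i = mid j → i = j := by
    intro i j h
    have h2 : (Sum.inl i : Fin t ⊕ Fin t ⊕ Unit) = Sum.inl j := hinj h
    exact Sum.inl.inj h2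
  have hlfinj : ∀ i j, lf i = lf j → i = j := by
    intro i j h
    have h2 : (Sum.inr (Sum.inl i) : Fin t ⊕ Fin t ⊕ Unit) = Sum.inr (Sum.inl j) := hinj h
    simpa using h2
  have hmidlf : ∀ i j, mid i ≠ lf j := by
    intro i j h
    have h2 : (Sum.inl i : Fin t ⊕ Fin t ⊕ Unit) = Sum.inr (Sum.inl j) := hinj h
    simp at h2
  have hmidu : ∀ i, mid i ≠ u := by
    intro i h
    have h2 : (Sum.inl i : Fin t ⊕ Fin t ⊕ Unit) = Sum.inr (Sum.inr ()) := hinj h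
    simp at h2
  have hlfu : ∀ i, lf i ≠ u := by
    intro i h
    have h2 : (Sum.inr (Sum.inl i) : Fin t ⊕ Fin t ⊕ Unit) = Sum.inr (Sum.inr ()) := hinj h
    simp at h2
  have hxvs : x ∈ vs := hI.lv_sub hx
  have hxu : x ≠ u := fun h => hu (h ▸ hxvs)
  have hxmid : ∀ i, x ≠ mid i := fun i h => hmid i (h ▸ hxvs)
  have hxlf : ∀ i, x ≠ lf i := fun i h => hlf i (h ▸ hxvs)
  have hne_u : ∀ y ∈ vs, y ≠ u := fun y hy e => hu (e ▸ hy)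
  have hne_mid : ∀ y ∈ vs, ∀ i, y ≠ mid i := fun y hy i e => hmid i (e ▸ hy)
  have hne_lf : ∀ y ∈ vs, ∀ i, y ≠ lf i := fun y hy i e => hlf i (e ▸ hy)
  have hGnotu : ∀ z, ¬ G.Adj u z := fun z h => hu (hI.edge_mem h).1
  have hGnotmid : ∀ i z, ¬ G.Adj (mid i) z := fun i z h => hmid i (hI.edge_mem h).1
  have hGnotlf : ∀ i z, ¬ G.Adj (lf i) z := fun i z h => hlf i (hI.edge_mem h).1
  have hG'u : ∀ z, G'.Adj u z ↔ z = x ∨ ∃ i, z = mid i := by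
    intro z; rw [hA]
    constructor
    · rintro (h | ⟨hne, ⟨h1, h2⟩ | ⟨h1, h2⟩ | ⟨i, hh⟩⟩)
      · exact absurd h (hGnotu z)
      · exact absurd h1.symm hxu
      · exact Or.inl h2
      · rcases hh with ⟨h1, h2⟩ | ⟨h1, h2⟩ | ⟨h1, h2⟩ | ⟨h1, h2⟩
        · exact Or.inr ⟨i, h2⟩
        · exact absurd h1.symm (hmidu i)
        · exact absurd h1.symm (hmidu i)
        · exact absurd h1.symm (hlfu i)
    · rintro (rfl | ⟨i, rfl⟩)
      · exact Or.inr ⟨Ne.symm hxu, Or.inr (Or.inl ⟨rfl, rfl⟩)⟩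
      · exact Or.inr ⟨Ne.symm (hmidu i), Or.inr (Or.inr ⟨i, Or.inl ⟨rfl, rfl⟩⟩)⟩
  have hG'mid : ∀ i z, G'.Adj (mid i) z ↔ z = u ∨ z = lf i := by
    intro i z; rw [hA]
    constructor
    · rintro (h | ⟨hne, ⟨h1, h2⟩ | ⟨h1, h2⟩ | ⟨j, hh⟩⟩)
      · exact absurd h (hGnotmid i z)
      · exact absurd h1.symm (hxmid i)
      · exact absurd h1 (hmidu i)
      · rcases hh with ⟨h1, h2⟩ | ⟨h1, h2⟩ | ⟨h1, h2⟩ | ⟨h1, h2⟩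
        · exact absurd h1 (hmidu i)
        · exact Or.inl h2
        · have := hmidinj i j h1
          subst this
          exact Or.inr h2
        · exact absurd h1 (hmidlf i j)
    · rintro (rfl | rfl)
      · exact Or.inr ⟨hmidu i, Or.inr (Or.inr ⟨i, Or.inr (Or.inl ⟨rfl, rfl⟩)⟩)⟩
      · exact Or.inr ⟨hmidlf i i, Or.inr (Or.inr ⟨i, Or.inr (Or.inr (Or.inl ⟨rfl, rfl⟩))⟩)⟩
  have hG'lf : ∀ i z, G'.Adj (lf i) z ↔ z = mid i := by
    intro i z; rw [hA]
    constructor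
    · rintro (h | ⟨hne, ⟨h1, h2⟩ | ⟨h1, h2⟩ | ⟨j, hh⟩⟩)
      · exact absurd h (hGnotlf i z)
      · exact absurd h1.symm (hxlf i)
      · exact absurd h1 (hlfu i)
      · rcases hh with ⟨h1, h2⟩ | ⟨h1, h2⟩ | ⟨h1, h2⟩ | ⟨h1, h2⟩
        · exact absurd h1 (hlfu i)
        · exact absurd h1.symm (hmidlf j i)
        · exact absurd h1.symm (hmidlf j i)
        · have := hlfinj i j h1
          subst this
          exact h2
    · rintro rfl
      exact Or.inr ⟨Ne.symm (hmidlf i i), Or.inr (Or.inr ⟨i, Or.inr (Or.inr (Or.inr ⟨rfl, rfl⟩))⟩)⟩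
  have hG'old : ∀ p z, p ∈ vs → p ≠ x → (G'.Adj p z ↔ G.Adj p z) := by
    intro p z hp hpx
    rw [hA]
    constructor
    · rintro (h | ⟨hne, ⟨h1, h2⟩ | ⟨h1, h2⟩ | ⟨i, hh⟩⟩)
      · exact h
      · exact absurd h1 hpx
      · exact absurd h1 (hne_u p hp)
      · rcases hh with ⟨h1, h2⟩ | ⟨h1, h2⟩ | ⟨h1, h2⟩ | ⟨h1, h2⟩
        · exact absurd h1 (hne_u p hp)
        · exact absurd h1 (hne_mid p hp i)
        · exact absurd h1 (hne_mid p hp i)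
        · exact absurd h1 (hne_lf p hp i)
    · exact Or.inl
  have hG'x : ∀ z, G'.Adj x z ↔ G.Adj x z ∨ z = u := by
    intro z
    rw [hA]
    constructor
    · rintro (h | ⟨hne, ⟨h1, h2⟩ | ⟨h1, h2⟩ | ⟨i, hh⟩⟩)
      · exact Or.inl h
      · exact Or.inr h2
      · exact absurd h1 hxu
      · rcases hh with ⟨h1, h2⟩ | ⟨h1, h2⟩ | ⟨h1, h2⟩ | ⟨h1, h2⟩
        · exact absurd h1 hxu
        · exact absurd h1 (hxmid i)
        · exact absurd h1 (hxmid i)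
        · exact absurd h1 (hxlf i)
    · rintro (h | rfl)
      · exact Or.inl h
      · exact Or.inr ⟨hxu, Or.inl ⟨rfl, rfl⟩⟩
  have hG'vs2 : ∀ a b, a ∈ vs → b ∈ vs → (G'.Adj a b ↔ G.Adj a b) := by
    intro a b ha hb
    rw [hA]
    constructor
    · rintro (h | ⟨hne, ⟨h1, h2⟩ | ⟨h1, h2⟩ | ⟨i, hh⟩⟩)
      · exact h
      · exact absurd h2 (hne_u b hb)
      · exact absurd h1 (hne_u a ha)
      · rcases hh with ⟨h1, h2⟩ | ⟨h1, h2⟩ | ⟨h1, h2⟩ | ⟨h1, h2⟩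
        · exact absurd h1 (hne_u a ha)
        · exact absurd h2 (hne_u b hb)
        · exact absurd h1 (hne_mid a ha i)
        · exact absurd h1 (hne_lf a ha i)
    · exact Or.inl
  have hlift : ∀ a b, G.Adj a b → G'.Adj a b := fun a b h => (hA a b).mpr (Or.inl h)
  have hadj_xu : G'.Adj x u := (hG'x u).mpr (Or.inr rfl)
  have hadj_umid : ∀ i, G'.Adj u (mid i) := fun i => (hG'u (mid i)).mpr (Or.inr ⟨i, rfl⟩)
  have hadj_midlf : ∀ i, G'.Adj (mid i) (lf i) := fun i => (hG'mid i (lf i)).mpr (Or.inr rfl)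
  have hmem_vs' : ∀ z, z ∈ vs' ↔ z ∈ vs ∨ z = u ∨ (∃ i, z = mid i) ∨ (∃ i, z = lf i) := by
    intro z
    simp only [hvs'def, Finset.mem_union, Finset.mem_singleton, Finset.mem_image,
      Finset.mem_univ, true_and]
    constructor
    · rintro (h | (h | ⟨i, rfl⟩) | ⟨i, rfl⟩)
      · exact Or.inl h
      · exact Or.inr (Or.inl h)
      · exact Or.inr (Or.inr (Or.inl ⟨i, rfl⟩))
      · exact Or.inr (Or.inr (Or.inr ⟨i, rfl⟩))
    · rintro (h | h | ⟨i, rfl⟩ | ⟨i, rfl⟩)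
      · exact Or.inl h
      · exact Or.inr (Or.inl (Or.inl h))
      · exact Or.inr (Or.inl (Or.inr ⟨i, rfl⟩))
      · exact Or.inr (Or.inr ⟨i, rfl⟩)
  have hmem_lv' : ∀ z, z ∈ lv' ↔ z ∈ lv ∨ ∃ i, z = lf i := by
    intro z
    simp only [hlv'def, Finset.mem_union, Finset.mem_image, Finset.mem_univ, true_and]
    constructor
    · rintro (h | ⟨i, rfl⟩)
      · exact Or.inl h
      · exact Or.inr ⟨i, rfl⟩
    · rintro (h | ⟨i, rfl⟩)
      · exact Or.inl h
      · exact Or.inr ⟨i, rfl⟩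
  have hulv' : u ∉ lv' := by
    rw [hmem_lv']
    rintro (h | ⟨i, h⟩)
    · exact hu (hI.lv_sub h)
    · exact hlfu i h.symm
  have hmidlv' : ∀ i, mid i ∉ lv' := by
    intro i hmem
    rw [hmem_lv'] at hmem
    rcases hmem with h | ⟨j, h⟩
    · exact hmid i (hI.lv_sub h)
    · exact hmidlf i j h
  have hvslv' : ∀ y ∈ vs, y ∉ lv → y ∉ lv' := by
    intro y hy hylv hmem
    rw [hmem_lv'] at hmem
    rcases hmem with h | ⟨i, h⟩
    · exact hylv h
    · exact hne_lf y hy i h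
  have hlflv' : ∀ i, lf i ∈ lv' := by
    intro i; rw [hmem_lv']; exact Or.inr ⟨i, rfl⟩
  have i0 : Fin t := ⟨0, ht⟩
  have hI' : FInv G' vs' lv' := by
    constructor
    · intro z hz
      rw [hmem_lv'] at hz; rw [hmem_vs']
      rcases hz with h | ⟨i, rfl⟩
      · exact Or.inl (hI.lv_sub h)
      · exact Or.inr (Or.inr (Or.inr ⟨i, rfl⟩))
    · intro p q h
      rw [hA] at h
      rw [hmem_vs', hmem_vs']
      rcases h with h | ⟨hne, ⟨rfl, rfl⟩ | ⟨rfl, rfl⟩ | ⟨i, hh⟩⟩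
      · exact ⟨Or.inl (hI.edge_mem h).1, Or.inl (hI.edge_mem h).2⟩
      · exact ⟨Or.inl hxvs, Or.inr (Or.inl rfl)⟩
      · exact ⟨Or.inr (Or.inl rfl), Or.inl hxvs⟩
      · rcases hh with ⟨rfl, rfl⟩ | ⟨rfl, rfl⟩ | ⟨rfl, rfl⟩ | ⟨rfl, rfl⟩
        · exact ⟨Or.inr (Or.inl rfl), Or.inr (Or.inr (Or.inl ⟨i, rfl⟩))⟩
        · exact ⟨Or.inr (Or.inr (Or.inl ⟨i, rfl⟩)), Or.inr (Or.inl rfl)⟩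
        · exact ⟨Or.inr (Or.inr (Or.inl ⟨i, rfl⟩)), Or.inr (Or.inr (Or.inr ⟨i, rfl⟩))⟩
        · exact ⟨Or.inr (Or.inr (Or.inr ⟨i, rfl⟩)), Or.inr (Or.inr (Or.inl ⟨i, rfl⟩))⟩
    · have hrx : ∀ z ∈ vs', G'.Reachable z x := by
        intro z hz
        rw [hmem_vs'] at hz
        rcases hz with h | rfl | ⟨i, rfl⟩ | ⟨i, rfl⟩
        · exact (hI.conn z h x hxvs).mono le_sup_left
        · exact hadj_xu.symm.reachable
        · exact ((hadj_umid i).symm.reachable).trans hadj_xu.symm.reachable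
        · exact ((hadj_midlf i).symm.reachable).trans
            (((hadj_umid i).symm.reachable).trans hadj_xu.symm.reachable)
      exact fun p hp q hq => (hrx p hp).trans (hrx q hq).symm
    · constructor
      · intro z hz
        rw [hmem_lv'] at hz; rw [hmem_vs']
        rcases hz with h | ⟨i, rfl⟩
        · exact Or.inl (hI.lv_sub h)
        · exact Or.inr (Or.inr (Or.inr ⟨i, rfl⟩))
      · intro z hz hzD
        rw [hmem_vs'] at hz
        rcases hz with h | rfl | ⟨i, rfl⟩ | ⟨i, rfl⟩
        · have hzlv : z ∉ lv := fun hh => hzD (by rw [hmem_lv']; exact Or.inl hh)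
          obtain ⟨⟨q, hq, hqa⟩, q', hq'vs, hq'lv, hq'a⟩ := hI.rds.2 z h hzlv
          exact ⟨⟨q, by rw [hmem_lv']; exact Or.inl hq, hlift _ _ hqa⟩,
            ⟨q', by rw [hmem_vs']; exact Or.inl hq'vs, hvslv' q' hq'vs hq'lv, hlift _ _ hq'a⟩⟩
        · refine ⟨⟨x, by rw [hmem_lv']; exact Or.inl hx, (hG'u x).mpr (Or.inl rfl)⟩,
            ⟨mid i0, by rw [hmem_vs']; exact Or.inr (Or.inr (Or.inl ⟨i0, rfl⟩)),
              hmidlv' i0, hadj_umid i0⟩⟩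
        · exact ⟨⟨lf i, hlflv' i, hadj_midlf i⟩,
            ⟨u, by rw [hmem_vs']; exact Or.inr (Or.inl rfl), hulv',
              (hG'mid i u).mpr (Or.inl rfl)⟩⟩
        · exact absurd (hlflv' i) hzD
    · intro p hp q hq hne
      rw [hmem_lv'] at hp hq
      have hblf : ∀ p', p' ∈ lv → ∀ i, ¬G'.Adj p' (lf i) ∧
          ∀ z, ¬(G'.Adj p' z ∧ G'.Adj z (lf i)) := by
        intro p' hp' i
        have hpvs := hI.lv_sub hp'
        constructor
        · intro h
          have := (hG'lf i p').mp h.symm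
          exact hne_mid p' hpvs i this
        · rintro z ⟨ha1, ha2⟩
          have hzmid : z = mid i := (hG'lf i z).mp ha2.symm
          rw [hzmid] at ha1
          rcases (hG'mid i p').mp ha1.symm with h | h
          · exact hne_u p' hpvs h
          · exact hne_lf p' hpvs i h
      rcases hp with hp | ⟨i, hpi⟩ <;> rcases hq with hq | ⟨j, hqj⟩
      · have hpvs := hI.lv_sub hp; have hqvs := hI.lv_sub hq
        constructor
        · exact fun h => (hI.pack p hp q hq hne).1 ((hG'vs2 p q hpvs hqvs).mp h)
        · rintro z ⟨ha1, ha2⟩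
          by_cases hzvs : z ∈ vs
          · exact (hI.pack p hp q hq hne).2 z
              ⟨(hG'vs2 p z hpvs hzvs).mp ha1, (hG'vs2 z q hzvs hqvs).mp ha2⟩
          · rw [hA] at ha1
            rcases ha1 with h | ⟨hne1, ⟨h1, h2⟩ | ⟨h1, h2⟩ | ⟨i, hh⟩⟩
            · exact hzvs (hI.edge_mem h).2
            · rw [h2] at ha2
              rcases (hG'u q).mp ha2 with h3 | ⟨i, h3⟩
              · exact hne (h1.trans h3.symm)
              · exact hne_mid q hqvs i h3
            · exact hne_u p hpvs h1
            · rcases hh with ⟨h1, h2⟩ | ⟨h1, h2⟩ | ⟨h1, h2⟩ | ⟨h1, h2⟩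
              · exact hne_u p hpvs h1
              · exact hne_mid p hpvs i h1
              · exact hne_mid p hpvs i h1
              · exact hne_lf p hpvs i h1
      · rw [hqj]; exact hblf p hp j
      · rw [hpi]
        have hres := hblf q hq i
        constructor
        · exact fun h => hres.1 h.symm
        · rintro z ⟨ha1, ha2⟩
          exact hres.2 z ⟨ha2.symm, ha1.symm⟩
      · rw [hpi, hqj]
        constructor
        · intro h
          exact hmidlf i j ((hG'lf i (lf j)).mp h).symm
        · rintro z ⟨ha1, ha2⟩
          have hz1 : z = mid i := (hG'lf i z).mp ha1
          have hz2 : z = mid j := (hG'lf j z).mp ha2.symm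
          have hij : i = j := hmidinj i j (hz1.symm.trans hz2)
          exact hne (hpi.trans (by rw [hij, ← hqj]))
    · obtain ⟨ord, B, hgood⟩ := hI.good
      refine ⟨fun z => if z ∈ vs then ord z else B + 1, B + 1, ?_⟩
      intro p hp
      rw [hmem_lv'] at hp
      rcases hp with hp | ⟨i, hpi⟩
      swap
      · rw [hpi]
        constructor
        · exact le_of_eq (if_neg (hlf i))
        · exact Or.inl ⟨mid i, hG'lf i⟩
      · have hpvs := hI.lv_sub hp
        constructor
        · simp only [if_pos hpvs]
          exact le_trans (hgood p hp).1 (Nat.le_succ B)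
        · by_cases hpx : p = x
          · rw [hpx]
            right
            refine ⟨t, u, mid, lf, ht, hulv', hG'u, ?_⟩
            intro i
            refine ⟨hmidlv' i, hlflv' i, ?_, hG'mid i⟩
            have hxB := (hgood x hx).1
            simp only [if_pos hxvs, if_neg (hlf i)]
            omega
          · rcases (hgood p hp).2 with ⟨y, hy⟩ | ⟨n, u0, m, tp, hn, hu0lv, hu0adj, hmprop⟩
            · left
              exact ⟨y, fun z => by rw [hG'old p z hpvs hpx, hy z]⟩
            · right
              have hu0adjp : G.Adj u0 p := (hu0adj p).mpr (Or.inl rfl)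
              have hu0vs : u0 ∈ vs := (hI.edge_mem hu0adjp).1
              have hu0x : u0 ≠ x := fun e => hu0lv (e ▸ hx)
              refine ⟨n, u0, m, tp, hn, hvslv' u0 hu0vs hu0lv, ?_, ?_⟩
              · intro z; rw [hG'old u0 z hu0vs hu0x, hu0adj z]
              · intro i
                obtain ⟨hmlv, htplv, hord, hmadj⟩ := hmprop i
                have hmadju : G.Adj (m i) u0 := (hmadj u0).mpr (Or.inl rfl)
                have hmvs : m i ∈ vs := (hI.edge_mem hmadju).1
                have hmx : m i ≠ x := fun e => hmlv (e ▸ hx)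
                have htpvs : tp i ∈ vs := hI.lv_sub htplv
                refine ⟨hvslv' (m i) hmvs hmlv, by rw [hmem_lv']; exact Or.inl htplv, ?_, ?_⟩
                · simp only [if_pos hpvs, if_pos htpvs]; exact hord
                · intro z; rw [hG'old (m i) z hmvs hmx, hmadj z]
  refine ⟨hI', ?_⟩
  intro P hPvs hPd
  have hdom' : ∀ z ∈ vs', z ∉ lv' → ∃ y ∈ lv', G'.Adj z y :=
    fun z hz hzD => (hI'.rds.2 z hz hzD).1
  have hle : P.card ≤ lv'.card := by
    apply packing_card_le hdom' hPvs
    exact fun a ha b hb hne => ⟨adj3 (hPd a ha b hb hne),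
      fun z hz => com3 (hPd a ha b hb hne) hz.1 hz.2⟩
  refine ⟨hle, ?_⟩
  intro hPcard
  have hlfinj' : Function.Injective lf := fun i j h => hlfinj i j h
  have hlfcard : (Finset.image lf Finset.univ).card = t := by
    rw [Finset.card_image_of_injective _ hlfinj', Finset.card_univ, Fintype.card_fin]
  have hlv'card : lv'.card = lv.card + t := by
    rw [hlv'def, Finset.card_union_of_disjoint, hlfcard]
    rw [Finset.disjoint_left]
    intro a ha hmem
    obtain ⟨i, -, rfl⟩ := Finset.mem_image.mp hmem
    exact hlf i (hI.lv_sub ha)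
  set Q := P ∩ vs with hQdef
  set R := P \ vs with hRdef
  have hsplit : Q.card + R.card = P.card := Finset.card_inter_add_card_sdiff P vs
  have hQsub : Q ⊆ vs := Finset.inter_subset_right
  have hQP : Q ⊆ P := Finset.inter_subset_left
  have hRP : R ⊆ P := Finset.sdiff_subset
  have hQpack : ∀ a ∈ Q, ∀ b ∈ Q, a ≠ b → 3 ≤ G.dist a b := by
    intro a ha b hb hne
    have h3 := hPd a (hQP ha) b (hQP hb) hne
    refine three_le_dist (hI.conn a (hQsub ha) b (hQsub hb)) hne ?_ ?_
    · exact fun hadj => adj3 h3 (hlift _ _ hadj)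
    · exact fun z hz => com3 h3 (hlift _ _ hz.1) (hlift _ _ hz.2)
  have hQle : Q.card ≤ lv.card := (hPU Q hQsub hQpack).1
  have hRsub : ∀ r ∈ R, r = u ∨ (∃ i, r = mid i) ∨ (∃ i, r = lf i) := by
    intro r hr
    have h1 := hPvs (hRP hr)
    rw [hmem_vs'] at h1
    have h2 := Finset.mem_sdiff.mp hr
    tauto
  have hPQR : P = Q ∪ R := by rw [hQdef, hRdef, Finset.union_comm, Finset.sdiff_union_inter]
  have hcards : Q.card + R.card = lv.card + t := by rw [hsplit, hPcard, hlv'card]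
  by_cases hcu : u ∈ R
  · have hRu : ∀ r ∈ R, r = u := by
      intro r hr
      rcases hRsub r hr with h | ⟨i, rfl⟩ | ⟨i, rfl⟩
      · exact h
      · exact absurd (hadj_umid i)
          (adj3 (hPd u (hRP hcu) (mid i) (hRP hr) (Ne.symm (hmidu i))))
      · exact (com3 (hPd u (hRP hcu) (lf i) (hRP hr) (Ne.symm (hlfu i)))
          (hadj_umid i) (hadj_midlf i)).elim
    have hR1 : R.card ≤ 1 :=
      Finset.card_le_one.mpr (fun a ha b hb => (hRu a ha).trans (hRu b hb).symm)
    have hQc : Q.card = lv.card := by omega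
    have hQlv : Q = lv := (hPU Q hQsub hQpack).2 hQc
    have hxP : x ∈ P := hQP (by rw [hQlv]; exact hx)
    exact absurd ((hG'u x).mpr (Or.inl rfl))
      (adj3 (hPd u (hRP hcu) x hxP (Ne.symm hxu)))
  by_cases hcm : ∃ i, mid i ∈ R
  · obtain ⟨i, hmi⟩ := hcm
    have hRsub2 : R ⊆ insert (mid i) (Finset.image lf Finset.univ \ {lf i}) := by
      intro r hr
      rcases hRsub r hr with h | ⟨j, rfl⟩ | ⟨j, rfl⟩
      · exact absurd (h ▸ hr) hcu
      · by_cases hji : mid j = mid i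
        · rw [hji]; exact Finset.mem_insert_self _ _
        · exact (com3 (hPd (mid j) (hRP hr) (mid i) (hRP hmi) hji)
            ((hG'mid j u).mpr (Or.inl rfl)) (hadj_umid i)).elim
      · by_cases hji : j = i
        · rw [hji] at hr ⊢
          exact absurd (hadj_midlf i)
            (adj3 (hPd (mid i) (hRP hmi) (lf i) (hRP hr) (hmidlf i i)))
        · apply Finset.mem_insert_of_mem
          rw [Finset.mem_sdiff]
          refine ⟨Finset.mem_image.mpr ⟨j, Finset.mem_univ j, rfl⟩, ?_⟩
          rw [Finset.mem_singleton]
          exact fun e => hji (hlfinj j i e)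
    have hR2 : R.card ≤ t := by
      have hc1 : R.card ≤ (Finset.image lf Finset.univ \ {lf i}).card + 1 :=
        le_trans (Finset.card_le_card hRsub2) (Finset.card_insert_le _ _)
      have hc2 : (Finset.image lf Finset.univ \ {lf i}).card = t - 1 := by
        rw [Finset.card_sdiff_of_subset (by
          rw [Finset.singleton_subset_iff]
          exact Finset.mem_image.mpr ⟨i, Finset.mem_univ i, rfl⟩), hlfcard,
          Finset.card_singleton]
      omega
    have hQc : Q.card = lv.card := by omega
    have hQlv : Q = lv := (hPU Q hQsub hQpack).2 hQc
    have hxP : x ∈ P := hQP (by rw [hQlv]; exact hx)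
    exact (com3 (hPd (mid i) (hRP hmi) x hxP (Ne.symm (hxmid i)))
      ((hG'mid i u).mpr (Or.inl rfl)) hadj_xu.symm).elim
  · have hRsub3 : R ⊆ Finset.image lf Finset.univ := by
      intro r hr
      rcases hRsub r hr with h | ⟨j, rfl⟩ | ⟨j, rfl⟩
      · exact absurd (h ▸ hr) hcu
      · exact absurd ⟨j, hr⟩ hcm
      · exact Finset.mem_image.mpr ⟨j, Finset.mem_univ j, rfl⟩
    have hR3 : R.card ≤ t := by
      have := Finset.card_le_card hRsub3
      omega
    have hQc : Q.card = lv.card := by omega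
    have hQlv : Q = lv := (hPU Q hQsub hQpack).2 hQc
    have hRall : R = Finset.image lf Finset.univ :=
      Finset.eq_of_subset_of_card_le hRsub3 (by rw [hlfcard]; omega)
    rw [hPQR, hQlv, hRall, hlv'def]

lemma main_induction {G : SimpleGraph ℕ} {vs lv : Finset ℕ} (h : InF G vs lv) :
    FInv G vs lv ∧ PackUniq G vs lv := by
  induction h with
  | base a b c d hab hac had hbc hbd hcd => exact base_case a b c d hab hac had hbc hbd hcd
  | o1 G vs lv x u v w hG hx hu hv hw huv huw hvw ih =>
      exact o1_case G vs lv x u v w hx hu hv hw huv huw hvw ih.1 ih.2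
  | o2 G vs lv x t u mid lf ht hG hx hu hmid hlf hinj ih =>
      exact o2_case G vs lv x t u mid lf ht hx hu hmid hlf hinj ih.1 ih.2


/-- For a tree T in the family 𝓕, LV(T) is the unique minimum restrained dominating set
and the unique maximum packing; in particular γ_r(T) = ρ(T) = |LV(T)|. -/
theorem lv_unique_min_rds_and_max_packing (G : SimpleGraph ℕ) (vs lv : Finset ℕ)
    (h : InF G vs lv) :
    IsRDSOn G vs lv ∧
    (∀ D : Finset ℕ, IsRDSOn G vs D → lv.card ≤ D.card ∧ (D.card = lv.card → D = lv)) ∧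
    rdnOn G vs = lv.card ∧
    (∀ a ∈ lv, ∀ b ∈ lv, a ≠ b → 3 ≤ G.dist a b) ∧
    (∀ P : Finset ℕ, P ⊆ vs → (∀ a ∈ P, ∀ b ∈ P, a ≠ b → 3 ≤ G.dist a b) →
      P.card ≤ lv.card ∧ (P.card = lv.card → P = lv)) := by
  obtain ⟨hI, hPU⟩ := main_induction h
  refine ⟨hI.rds, fun D hD => rds_unique hI hD, ?_, ?_, hPU⟩
  · apply le_antisymm
    · exact Nat.sInf_le ⟨lv, hI.rds, rfl⟩
    · have hne : {n | ∃ D : Finset ℕ, IsRDSOn G vs D ∧ D.card = n}.Nonempty :=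
        ⟨lv.card, lv, hI.rds, rfl⟩
      obtain ⟨D, hD, hDc⟩ := Nat.sInf_mem hne
      rw [rdnOn, ← hDc]
      exact (rds_unique hI hD).1
  · intro a ha b hb hne
    have hp := hI.pack a ha b hb hne
    exact three_le_dist (hI.conn a (hI.lv_sub ha) b (hI.lv_sub hb)) hne hp.1 hp.2
end
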